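/- arXiv:2305.15356 — 6 statements merged into one kernel-verified Lean document; each statement's English description precedes it below -/
import Mathlib

section
/- For α ∈ (0,1), the principal value integral PV ∫₀^∞ t^(α−1)/(1−t) dt, defined as lim_{ε→0⁺} (∫₀^{1−ε} t^(α−1)/(1−t) dt + ∫_{1+ε}^∞ t^(α−1)/(1−t) dt), equals 0 if and only if α = 1/2. -/
open MeasureTheory Filter Real Set



/-- Integrability of `t^c/(1-t)` on `(0, b]` for `c > -1`, `b < 1`. -/
private lemma pv_aux_integrableOn (c b : ℝ) (hc : -1 < c) (hb0 : 0 < b) (hb : b < 1) :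
    IntegrableOn (fun t : ℝ => t ^ c / (1 - t)) (Ioc 0 b) := by
  have hmeas : AEStronglyMeasurable (fun t : ℝ => t ^ c / (1 - t))
      (volume.restrict (Ioc 0 b)) := by
    apply Measurable.aestronglyMeasurable
    exact (measurable_id.pow_const c).div (measurable_const.sub measurable_id)
  have hint : IntegrableOn (fun t : ℝ => t ^ c * (1 - b)⁻¹) (Ioc 0 b) := by
    apply Integrable.mul_const
    have := intervalIntegral.intervalIntegrable_rpow' (a := 0) (b := b) hc
    rwa [intervalIntegrable_iff_integrableOn_Ioc_of_le hb0.le] at this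
  refine hint.mono' hmeas ?_
  filter_upwards [ae_restrict_mem measurableSet_Ioc] with t ht
  obtain ⟨ht0, htb⟩ := ht
  have h1 : 0 < 1 - t := by linarith
  have h2 : (1 - t)⁻¹ ≤ (1 - b)⁻¹ := by
    apply inv_anti₀ (by linarith) (by linarith)
  rw [Real.norm_eq_abs, abs_of_nonneg (by positivity)]
  rw [div_eq_mul_inv]
  exact mul_le_mul_of_nonneg_left h2 (by positivity)


/-- Substitution `t ↦ 1/t`: the tail integral equals a piece near `0`. -/
private lemma pv_aux_subst (α b : ℝ) (hb : 1 < b) :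
    (∫ t in Ioi b, t ^ (α - 1) / (1 - t)) =
      - ∫ t in Ioo 0 b⁻¹, t ^ (-α) / (1 - t) := by
  have hb0 : (0:ℝ) < b := lt_trans one_pos hb
  have himg : (fun x : ℝ => x⁻¹) '' Ioo 0 b⁻¹ = Ioi b := by
    ext x
    simp only [mem_image, mem_Ioo, mem_Ioi]
    constructor
    · rintro ⟨y, ⟨hy0, hyb⟩, rfl⟩
      rw [← inv_inv b]
      gcongr
    · intro hx
      have hx0 : 0 < x := lt_trans hb0 hx
      exact ⟨x⁻¹, ⟨inv_pos.2 hx0, by rwa [inv_lt_inv₀ hx0 hb0]⟩, inv_inv x⟩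
  have key := integral_image_eq_integral_abs_deriv_smul (f := fun x : ℝ => x⁻¹)
      (f' := fun x : ℝ => -(x ^ 2)⁻¹) (s := Ioo 0 b⁻¹) measurableSet_Ioo
      (fun x hx => (hasDerivAt_inv (ne_of_gt hx.1)).hasDerivWithinAt)
      (inv_injective.injOn)
      (fun t => t ^ (α - 1) / (1 - t))
  rw [himg] at key
  rw [key, ← integral_neg]
  apply setIntegral_congr_fun measurableSet_Ioo
  intro x hx
  obtain ⟨hx0, hxb⟩ := hx
  have hx1 : x < 1 := hxb.trans_le (by rw [inv_le_one_iff₀]; right; exact hb.le)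
  have hxne : x ≠ 0 := ne_of_gt hx0
  have h1x : 1 - x ≠ 0 := by intro h; nlinarith
  have hy : 0 < x ^ α := Real.rpow_pos_of_pos hx0 α
  have e1 : (x⁻¹ : ℝ) ^ (α - 1) = (x ^ (α - 1))⁻¹ := Real.inv_rpow hx0.le _
  have e2 : x ^ (α - 1) = x ^ α / x := by
    rw [Real.rpow_sub hx0, Real.rpow_one]
  have e3 : x ^ (-α) = (x ^ α)⁻¹ := Real.rpow_neg hx0.le α
  simp only [smul_eq_mul, abs_neg, abs_inv, sq_abs, e1, e2, e3]
  have hx2 : (x:ℝ) ^ 2 ≠ 0 := pow_ne_zero 2 hxne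
  have h1xi : 1 - x⁻¹ ≠ 0 := by
    intro h
    apply h1x
    have : x⁻¹ = 1 := by linarith
    have : x = 1 := by field_simp at this; linarith
    linarith
  field_simp
  have hd : (-(x ^ 2 * x ^ α) + x ^ 3 * x ^ α) ≠ 0 := by
    have h : -(x ^ 2 * x ^ α) + x ^ 3 * x ^ α = -(x ^ 2 * x ^ α * (1 - x)) := by ring
    rw [h, neg_ne_zero]
    exact mul_ne_zero (mul_ne_zero (pow_ne_zero _ hxne) (ne_of_gt hy)) h1x
  have hx1' : x - 1 ≠ 0 := by intro h; apply h1x; linarith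
  rw [abs_of_nonneg (by positivity), div_eq_iff hx1']
  ring


private lemma pv_aux_bound (α t : ℝ) (hα0 : 0 < α) (hα1 : α < 1)
    (ht : t ∈ Set.Ico (1/2 : ℝ) 1) :
    |t ^ (α - 1) / (1 - t) - t ^ (-α) / (1 - t)| ≤ 8 * |2 * α - 1| := by
  obtain ⟨ht2, ht1⟩ := ht
  have ht0 : (0:ℝ) < t := by linarith
  have h1t : 0 < 1 - t := by linarith
  set c : ℝ := 2 * α - 1 with hc
  have hsplit : t ^ (α - 1) = t ^ (-α) * t ^ c := by
    rw [← Real.rpow_add ht0]; congr 1; rw [hc]; ring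
  have hlog : |Real.log t| ≤ 2 * (1 - t) := by
    have hl1 : Real.log t ≤ 0 := Real.log_nonpos ht0.le ht1.le
    rw [abs_of_nonpos hl1]
    have : Real.log t⁻¹ ≤ t⁻¹ - 1 := Real.log_le_sub_one_of_pos (inv_pos.2 ht0)
    rw [Real.log_inv] at this
    have h2 : t⁻¹ ≤ 2 := by
      rw [inv_le_comm₀ ht0 (by norm_num)]; linarith
    have h3 : t⁻¹ - 1 = (1 - t) * t⁻¹ := by field_simp
    nlinarith [inv_pos.2 ht0]
  have hcle : |c| ≤ 1 := by rw [abs_le]; constructor <;> linarith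
  have hlog1 : |Real.log t| ≤ 1 := by
    have : -Real.log t ≤ Real.log 2 := by
      rw [← Real.log_inv]
      apply Real.log_le_log (by positivity)
      rw [inv_le_comm₀ ht0 (by norm_num)]; linarith
    have h2 : Real.log 2 ≤ 1 := by
      have := Real.log_le_sub_one_of_pos (by norm_num : (0:ℝ) < 2); linarith
    rw [abs_of_nonpos (Real.log_nonpos ht0.le ht1.le)]; linarith
  have hrc : |t ^ c - 1| ≤ 4 * |c| * (1 - t) := by
    rw [Real.rpow_def_of_pos ht0]
    calc |Real.exp (Real.log t * c) - 1| ≤ 2 * |Real.log t * c| := by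
          apply Real.abs_exp_sub_one_le
          rw [abs_mul]
          calc |Real.log t| * |c| ≤ 1 * 1 := by
                apply mul_le_mul hlog1 hcle (abs_nonneg _) zero_le_one
            _ = 1 := by norm_num
      _ ≤ 4 * |c| * (1 - t) := by
          rw [abs_mul]
          calc 2 * (|Real.log t| * |c|) ≤ 2 * (2 * (1 - t) * |c|) := by
                apply mul_le_mul_of_nonneg_left _ (by norm_num)
                exact mul_le_mul_of_nonneg_right hlog (abs_nonneg _)
            _ = 4 * |c| * (1 - t) := by ring
  have hta : t ^ (-α) ≤ 2 := by
    have e : t ^ (-α) = (t⁻¹) ^ α := by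
      rw [Real.inv_rpow ht0.le, ← Real.rpow_neg ht0.le]
    rw [e]
    calc (t⁻¹) ^ α ≤ (2:ℝ) ^ α := by
          apply Real.rpow_le_rpow (by positivity) _ hα0.le
          rw [inv_le_comm₀ ht0 (by norm_num)]; linarith
      _ ≤ (2:ℝ) ^ (1:ℝ) := Real.rpow_le_rpow_of_exponent_le one_le_two hα1.le
      _ = 2 := Real.rpow_one 2
  have key : t ^ (α - 1) / (1 - t) - t ^ (-α) / (1 - t)
      = t ^ (-α) * (t ^ c - 1) / (1 - t) := by
    rw [hsplit]; ring
  rw [key, abs_div, abs_of_pos h1t, div_le_iff₀ h1t, abs_mul,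
    abs_of_nonneg (Real.rpow_nonneg ht0.le _)]
  calc t ^ (-α) * |t ^ c - 1| ≤ 2 * (4 * |c| * (1 - t)) := by
        apply mul_le_mul hta hrc (abs_nonneg _) (by norm_num)
    _ = 8 * |c| * (1 - t) := by ring


private lemma pv_aux_f_integrable (α : ℝ) (hα0 : 0 < α) (hα1 : α < 1) :
    IntegrableOn (fun t : ℝ => t ^ (α - 1) / (1 - t) - t ^ (-α) / (1 - t)) (Ioc 0 1) := by
  have hu : Ioc (0:ℝ) 1 = Ioc 0 (1/2) ∪ Ioc (1/2) 1 :=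
    (Set.Ioc_union_Ioc_eq_Ioc (by norm_num) (by norm_num)).symm
  rw [hu]
  apply IntegrableOn.union
  · exact (pv_aux_integrableOn (α - 1) (1/2) (by linarith) (by norm_num) (by norm_num)).sub
      (pv_aux_integrableOn (-α) (1/2) (by linarith) (by norm_num) (by norm_num))
  · have hmeas : AEStronglyMeasurable
        (fun t : ℝ => t ^ (α - 1) / (1 - t) - t ^ (-α) / (1 - t))
        (volume.restrict (Ioc (1/2 : ℝ) 1)) := by
      apply Measurable.aestronglyMeasurable
      exact ((measurable_id.pow_const (α-1)).div (measurable_const.sub measurable_id)).sub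
        ((measurable_id.pow_const (-α)).div (measurable_const.sub measurable_id))
    have hintc : IntegrableOn (fun _ : ℝ => 8 * |2 * α - 1|) (Ioc (1/2 : ℝ) 1) :=
      integrableOn_const measure_Ioc_lt_top.ne
    refine hintc.mono' hmeas ?_
    filter_upwards [ae_restrict_mem measurableSet_Ioc] with t ht
    rw [Real.norm_eq_abs]
    rcases eq_or_lt_of_le ht.2 with h1 | h1
    · subst h1
      simp only [sub_self, div_zero, sub_zero, abs_zero]
      positivity
    · exact pv_aux_bound α t hα0 hα1 ⟨ht.1.le, h1⟩


/-- For `α ∈ (0,1)`, the principal value `PV ∫₀^∞ t^(α−1)/(1−t) dt`, defined as the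
limit as `ε → 0⁺` of `∫₀^{1−ε} t^(α−1)/(1−t) dt + ∫_{1+ε}^∞ t^(α−1)/(1−t) dt`,
equals `0` if and only if `α = 1/2`. -/
theorem pv_integral_eq_zero_iff (α : ℝ) (hα : α ∈ Set.Ioo (0:ℝ) 1) (L : ℝ)
    (hL : Tendsto
      (fun ε : ℝ =>
        (∫ t in (0:ℝ)..(1 - ε), t ^ (α - 1) / (1 - t)) +
        ∫ t in Set.Ioi (1 + ε), t ^ (α - 1) / (1 - t))
      (nhdsWithin 0 (Set.Ioi 0)) (nhds L)) :
    L = 0 ↔ α = 1 / 2 := by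
  obtain ⟨hα0, hα1⟩ := hα
  set f : ℝ → ℝ := fun t => t ^ (α - 1) / (1 - t) - t ^ (-α) / (1 - t) with hf
  set I : ℝ := ∫ t in Ioc (0:ℝ) 1, f t with hI
  have hfint := pv_aux_f_integrable α hα0 hα1
  -- Step 1: first piece tends to I
  have htendI : Tendsto (fun ε : ℝ => ∫ t in Ioc 0 (1 - ε), f t)
      (nhdsWithin 0 (Ioi 0)) (nhds I) := by
    have hIcc : IntegrableOn f (Icc 0 1) := by
      rwa [integrableOn_Icc_iff_integrableOn_Ioc]
    have hcont := intervalIntegral.continuousOn_primitive (a := 0) (b := 1) (μ := volume) hIcc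
    have h1 : Tendsto (fun ε : ℝ => 1 - ε) (nhdsWithin 0 (Ioi 0))
        (nhdsWithin 1 (Icc 0 1)) := by
      rw [tendsto_nhdsWithin_iff]
      constructor
      · have h2 : Tendsto (fun ε : ℝ => 1 - ε) (nhds 0) (nhds 1) := by
          exact (continuous_const.sub continuous_id).tendsto' 0 1 (by norm_num)
        exact h2.mono_left nhdsWithin_le_nhds
      · filter_upwards [Ioo_mem_nhdsGT_of_mem (Set.left_mem_Ico.2 one_pos)] with ε hε
        exact ⟨by linarith [hε.2], by linarith [hε.1]⟩
    exact ((hcont 1 (right_mem_Icc.2 zero_le_one)).tendsto).comp h1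
  -- Step 2: error term tends to 0
  have htendE : Tendsto (fun ε : ℝ => ∫ t in Ioo (1 - ε) (1 + ε)⁻¹, t ^ (-α) / (1 - t))
      (nhdsWithin 0 (Ioi 0)) (nhds 0) := by
    apply squeeze_zero_norm' (a := fun ε : ℝ => 4 * ε)
    · filter_upwards [Ioo_mem_nhdsGT_of_mem
        (Set.left_mem_Ico.2 (by norm_num : (0:ℝ) < 1/2))] with ε hε
      obtain ⟨hε0, hε12⟩ := hε
      have hb0 : (0:ℝ) < 1 + ε := by linarith
      have hi : (1 + ε) * (1 + ε)⁻¹ = 1 := mul_inv_cancel₀ (ne_of_gt hb0)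
      have hC : ∀ t ∈ Ioo (1 - ε) (1 + ε)⁻¹, ‖t ^ (-α) / (1 - t)‖ ≤ 4 / ε := by
        intro t ht
        obtain ⟨ht1, ht2⟩ := ht
        have ht0 : (0:ℝ) < t := by linarith
        have htl1 : t < 1 := by nlinarith [inv_pos.2 hb0]
        have h1t : 0 < 1 - t := by linarith
        have hta : t ^ (-α) ≤ 2 := by
          have e : t ^ (-α) = (t⁻¹) ^ α := by
            rw [Real.inv_rpow ht0.le, ← Real.rpow_neg ht0.le]
          rw [e]
          calc (t⁻¹) ^ α ≤ (2:ℝ) ^ α := by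
                apply Real.rpow_le_rpow (by positivity) _ hα0.le
                rw [inv_le_comm₀ ht0 (by norm_num)]; linarith
            _ ≤ (2:ℝ) ^ (1:ℝ) := Real.rpow_le_rpow_of_exponent_le one_le_two hα1.le
            _ = 2 := Real.rpow_one 2
        have h1t2 : ε / 2 ≤ 1 - t := by nlinarith [inv_pos.2 hb0]
        rw [Real.norm_eq_abs, abs_of_nonneg (by positivity)]
        calc t ^ (-α) / (1 - t) ≤ 2 / (ε / 2) :=
              div_le_div₀ (by norm_num) hta (by positivity) h1t2
          _ = 4 / ε := by field_simp; ring
      have hb := norm_setIntegral_le_of_norm_le_const (C := 4 / ε)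
        (show volume (Ioo (1 - ε) (1 + ε)⁻¹) < ⊤ from measure_Ioo_lt_top)
        hC
      refine hb.trans ?_
      rw [measureReal_def, Real.volume_Ioo, ENNReal.toReal_ofReal (by nlinarith [inv_pos.2 hb0])]
      have h1 : (1 + ε)⁻¹ ≤ 1 - ε + ε * ε := by
        rw [← one_div, div_le_iff₀ hb0]; nlinarith
      rw [div_mul_eq_mul_div, div_le_iff₀ hε0]
      nlinarith
    · have : Tendsto (fun ε : ℝ => 4 * ε) (nhds 0) (nhds 0) := by
        exact (continuous_const.mul continuous_id).tendsto' 0 0 (by norm_num)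
      exact this.mono_left nhdsWithin_le_nhds
  -- Step 3: eventual equality
  have heq : (fun ε : ℝ =>
        (∫ t in (0:ℝ)..(1 - ε), t ^ (α - 1) / (1 - t)) +
        ∫ t in Set.Ioi (1 + ε), t ^ (α - 1) / (1 - t))
      =ᶠ[nhdsWithin 0 (Ioi 0)]
      (fun ε : ℝ => (∫ t in Ioc 0 (1 - ε), f t)
        - ∫ t in Ioo (1 - ε) (1 + ε)⁻¹, t ^ (-α) / (1 - t)) := by
    filter_upwards [Ioo_mem_nhdsGT_of_mem
      (Set.left_mem_Ico.2 (by norm_num : (0:ℝ) < 1/2))] with ε hε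
    obtain ⟨hε0, hε12⟩ := hε
    have h1e : (0:ℝ) < 1 - ε := by linarith
    have hb1 : (1:ℝ) < 1 + ε := by linarith
    have hb0 : (0:ℝ) < 1 + ε := by linarith
    have hi : (1 + ε) * (1 + ε)⁻¹ = 1 := mul_inv_cancel₀ (ne_of_gt hb0)
    have hbi0 : 0 < (1 + ε)⁻¹ := inv_pos.2 hb0
    have hbi1 : (1 + ε)⁻¹ < 1 := by nlinarith
    have hlt : 1 - ε < (1 + ε)⁻¹ := by nlinarith
    have hsplit : Ioo (0:ℝ) (1 + ε)⁻¹ = Ioc 0 (1 - ε) ∪ Ioo (1 - ε) (1 + ε)⁻¹ :=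
      (Set.Ioc_union_Ioo_eq_Ioo h1e.le hlt).symm
    have hk1 : IntegrableOn (fun t : ℝ => t ^ (-α) / (1 - t)) (Ioc 0 (1 - ε)) :=
      pv_aux_integrableOn _ _ (by linarith) h1e (by linarith)
    have hk2 : IntegrableOn (fun t : ℝ => t ^ (-α) / (1 - t)) (Ioo (1 - ε) (1 + ε)⁻¹) := by
      apply (pv_aux_integrableOn (-α) ((1 + ε)⁻¹) (by linarith) hbi0 hbi1).mono_set
      exact fun x hx => ⟨by linarith [hx.1], le_of_lt hx.2⟩
    have hh1 : IntegrableOn (fun t : ℝ => t ^ (α - 1) / (1 - t)) (Ioc 0 (1 - ε)) :=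
      pv_aux_integrableOn _ _ (by linarith) h1e (by linarith)
    have hdisj : Disjoint (Ioc (0:ℝ) (1 - ε)) (Ioo (1 - ε) (1 + ε)⁻¹) := by
      rw [Set.disjoint_left]
      rintro x ⟨_, hx2⟩ ⟨hx3, _⟩
      linarith
    rw [intervalIntegral.integral_of_le h1e.le, pv_aux_subst α (1 + ε) hb1, hsplit,
      setIntegral_union hdisj measurableSet_Ioo hk1 hk2,
      show (∫ t in Ioc (0:ℝ) (1 - ε), f t)
          = (∫ t in Ioc (0:ℝ) (1 - ε), t ^ (α - 1) / (1 - t))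
            - ∫ t in Ioc (0:ℝ) (1 - ε), t ^ (-α) / (1 - t) from integral_sub hh1 hk1]
    ring
  -- conclude L = I
  have hLI : L = I := by
    have hFI : Tendsto (fun ε : ℝ =>
        (∫ t in (0:ℝ)..(1 - ε), t ^ (α - 1) / (1 - t)) +
        ∫ t in Set.Ioi (1 + ε), t ^ (α - 1) / (1 - t))
        (nhdsWithin 0 (Ioi 0)) (nhds I) := by
      have := htendI.sub htendE
      rw [sub_zero] at this
      exact this.congr' heq.symm
    exact tendsto_nhds_unique hL hFI
  -- Step 4: sign analysis
  rcases lt_trichotomy α (1/2) with hlt | heq2 | hgt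
  · have hpos : 0 < I := by
      rw [hI, ← intervalIntegral.integral_of_le zero_le_one]
      apply intervalIntegral.intervalIntegral_pos_of_pos_on
      · rw [intervalIntegrable_iff_integrableOn_Ioc_of_le zero_le_one]; exact hfint
      · intro t ht
        have h1 : t ^ (-α) < t ^ (α - 1) :=
          Real.rpow_lt_rpow_of_exponent_gt ht.1 ht.2 (by linarith)
        have h2 : 0 < 1 - t := by linarith [ht.2]
        have : t ^ (-α) / (1 - t) < t ^ (α - 1) / (1 - t) := by gcongr
        simpa [hf] using sub_pos.2 this
      · norm_num
    constructor
    · intro h0; rw [hLI] at h0; linarith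
    · intro h0; linarith
  · have hzero : I = 0 := by
      rw [hI]
      have hz : ∀ t : ℝ, f t = 0 := by
        intro t
        rw [hf]
        rw [heq2, show (1:ℝ)/2 - 1 = -(1/2) by norm_num]
        ring
      simp [hz]
    constructor
    · intro _; exact heq2
    · intro _; rw [hLI, hzero]
  · have hneg : I < 0 := by
      have hpos : 0 < ∫ t in (0:ℝ)..1, (-(f t)) := by
        apply intervalIntegral.intervalIntegral_pos_of_pos_on
        · rw [intervalIntegrable_iff_integrableOn_Ioc_of_le zero_le_one]
          exact hfint.neg
        · intro t ht
          have h1 : t ^ (α - 1) < t ^ (-α) :=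
            Real.rpow_lt_rpow_of_exponent_gt ht.1 ht.2 (by linarith)
          have h2 : 0 < 1 - t := by linarith [ht.2]
          have : t ^ (α - 1) / (1 - t) < t ^ (-α) / (1 - t) := by gcongr
          simp only [hf, neg_sub]
          exact sub_pos.2 this
        · norm_num
      rw [intervalIntegral.integral_neg] at hpos
      rw [hI, ← intervalIntegral.integral_of_le zero_le_one]
      linarith
    constructor
    · intro h0; rw [hLI] at h0; linarith
    · intro h0; linarith
end

section
/- Fix x₁ > 0 and α ∈ (0,1). Then lim_{x₂→0⁺} (1/(2π)) ∫₀^∞ x₂ s^(α−1) / ((x₁ − s)² + x₂²) ds = x₁^(α−1)/2, and the corresponding limit as x₂ → 0⁻ equals −x₁^(α−1)/2. -/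
open MeasureTheory Filter Real Set


lemma shift_Ioi (g : ℝ → ℝ) (a d : ℝ) :
    ∫ x in Ioi a, g (d + x) = ∫ x in Ioi (d + a), g x := by
  rw [← integral_indicator measurableSet_Ioi, ← integral_indicator measurableSet_Ioi,
    ← integral_add_left_eq_self (μ := volume) ((Ioi (d + a)).indicator g) d]
  refine integral_congr_ae (Eventually.of_forall fun x => ?_)
  by_cases h : a < x
  · simp [Set.indicator_apply, mem_Ioi, h]
  · simp [Set.indicator_apply, mem_Ioi, h]

lemma cov_Ioi (g : ℝ → ℝ) (a d : ℝ) {c : ℝ} (hc : 0 < c) :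
    ∫ s in Ioi a, g s = c * ∫ t in Ioi ((a - d) / c), g (d + c * t) := by
  rw [integral_comp_mul_left_Ioi (fun u => g (d + u)) _ hc,
    show c * ((a - d) / c) = a - d by field_simp, smul_eq_mul,
    shift_Ioi g (a - d) d, show d + (a - d) = a by ring, ← mul_assoc,
    mul_inv_cancel₀ hc.ne', one_mul]

lemma pk_main (x₁ α : ℝ) (hx₁ : 0 < x₁) (hα : α ∈ Set.Ioo (0:ℝ) 1) :
    Tendsto (fun x₂ : ℝ => ∫ s in Set.Ioi (0:ℝ), x₂ * s ^ (α - 1) / ((x₁ - s) ^ 2 + x₂ ^ 2))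
      (nhdsWithin 0 (Set.Ioi 0)) (nhds (Real.pi * x₁ ^ (α - 1))) := by
  set b : ℝ := x₁ / 2 with hbdef
  have hb : 0 < b := by positivity
  have he2 : α - 1 ≤ 0 := by linarith [hα.2]
  set f : ℝ → ℝ → ℝ := fun x₂ s => x₂ * s ^ (α - 1) / ((x₁ - s) ^ 2 + x₂ ^ 2) with hf
  -- integrability of rpow piece
  have hrpow_int : IntegrableOn (fun s : ℝ => s ^ (α - 1)) (Ioc 0 b) := by
    have h := intervalIntegral.intervalIntegrable_rpow' (a := 0) (b := b)
      (r := α - 1) (by linarith [hα.1])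
    rwa [intervalIntegrable_iff_integrableOn_Ioc_of_le hb.le] at h
  -- Poisson kernel integrable
  have hP : ∀ x₂ : ℝ, x₂ ≠ 0 → Integrable (fun s : ℝ => ((x₁ - s) ^ 2 + x₂ ^ 2)⁻¹) := by
    intro x₂ h
    have h1 : Integrable (fun u : ℝ => (1 + (u / x₂) ^ 2)⁻¹) :=
      integrable_inv_one_add_sq.comp_div h
    have h2 := (h1.comp_sub_right x₁).const_mul ((x₂ ^ 2)⁻¹)
    refine h2.congr (Eventually.of_forall fun s => ?_)
    have hd : (x₁ - s) ^ 2 + x₂ ^ 2 ≠ 0 := by positivity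
    field_simp
    ring
  have hfm : ∀ x₂ : ℝ, Measurable (f x₂) := by intro x₂; fun_prop
  -- integrability on Ioc 0 b
  have hIoc : ∀ x₂ : ℝ, 0 < x₂ → IntegrableOn (f x₂) (Ioc 0 b) := by
    intro x₂ hx₂
    refine ((hrpow_int.const_mul (x₂ / b ^ 2)).mono ((hfm x₂).aestronglyMeasurable.restrict)
      ?_)
    rw [ae_restrict_iff' measurableSet_Ioc]
    refine Eventually.of_forall fun s hs => ?_
    have hs0 : 0 < s := hs.1
    have hsb : s ≤ b := hs.2
    have hden : b ^ 2 ≤ (x₁ - s) ^ 2 + x₂ ^ 2 := by nlinarith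
    have hden0 : (0:ℝ) < (x₁ - s) ^ 2 + x₂ ^ 2 := by positivity
    have hrp : (0:ℝ) ≤ s ^ (α - 1) := rpow_nonneg hs0.le _
    rw [Real.norm_eq_abs, Real.norm_eq_abs, abs_of_nonneg (by positivity),
      abs_of_nonneg (by positivity)]
    rw [div_le_iff₀ hden0]
    have : x₂ / b ^ 2 * s ^ (α - 1) * b ^ 2 = x₂ * s ^ (α - 1) := by field_simp
    nlinarith [mul_le_mul_of_nonneg_left hden (by positivity : (0:ℝ) ≤ x₂ / b ^ 2 * s ^ (α - 1))]
  -- integrability on Ioi b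
  have hIoi : ∀ x₂ : ℝ, 0 < x₂ → IntegrableOn (f x₂) (Ioi b) := by
    intro x₂ hx₂
    refine Integrable.mono (((hP x₂ hx₂.ne').const_mul (x₂ * b ^ (α - 1))).integrableOn)
      ((hfm x₂).aestronglyMeasurable.restrict) ?_
    rw [ae_restrict_iff' measurableSet_Ioi]
    refine Eventually.of_forall fun s hs => ?_
    have hs0 : b < s := hs
    have hrp : s ^ (α - 1) ≤ b ^ (α - 1) := rpow_le_rpow_of_nonpos hb hs0.le he2
    have hden0 : (0:ℝ) < (x₁ - s) ^ 2 + x₂ ^ 2 := by positivity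
    have hrp0 : (0:ℝ) ≤ s ^ (α - 1) := rpow_nonneg (by linarith) _
    rw [Real.norm_eq_abs, Real.norm_eq_abs, abs_of_nonneg (by positivity),
      abs_of_nonneg (by positivity)]
    have h1 : x₂ * s ^ (α - 1) ≤ x₂ * b ^ (α - 1) :=
      mul_le_mul_of_nonneg_left hrp hx₂.le
    show x₂ * s ^ (α - 1) / ((x₁ - s) ^ 2 + x₂ ^ 2) ≤ x₂ * b ^ (α - 1) * ((x₁ - s) ^ 2 + x₂ ^ 2)⁻¹
    rw [div_eq_mul_inv]
    exact mul_le_mul_of_nonneg_right h1 (by positivity)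
  -- splitting
  have hsplit : ∀ x₂ : ℝ, 0 < x₂ →
      (∫ s in Ioi (0:ℝ), f x₂ s)
        = (∫ s in Ioc 0 b, f x₂ s) + ∫ s in Ioi b, f x₂ s := by
    intro x₂ hx₂
    rw [← setIntegral_union (Ioc_disjoint_Ioi le_rfl) measurableSet_Ioi (hIoc x₂ hx₂)
      (hIoi x₂ hx₂), Ioc_union_Ioi_eq_Ioi hb.le]
  -- A piece
  set C : ℝ := ∫ s in Ioc 0 b, s ^ (α - 1) / b ^ 2 with hC
  have hA0 : ∀ x₂ : ℝ, 0 < x₂ → 0 ≤ ∫ s in Ioc 0 b, f x₂ s := by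
    intro x₂ hx₂
    refine setIntegral_nonneg measurableSet_Ioc fun s hs => ?_
    exact div_nonneg (mul_nonneg hx₂.le (rpow_nonneg hs.1.le _)) (by positivity)
  have hA_le : ∀ x₂ : ℝ, 0 < x₂ → (∫ s in Ioc 0 b, f x₂ s) ≤ x₂ * C := by
    intro x₂ hx₂
    have step : (∫ s in Ioc 0 b, f x₂ s) ≤ ∫ s in Ioc 0 b, x₂ * (s ^ (α - 1) / b ^ 2) := by
      refine setIntegral_mono_on (hIoc x₂ hx₂)
        ((hrpow_int.div_const _).const_mul x₂) measurableSet_Ioc fun s hs => ?_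
      have hden : b ^ 2 ≤ (x₁ - s) ^ 2 + x₂ ^ 2 := by nlinarith [hs.1, hs.2, sq_nonneg x₂]
      have hnum : (0:ℝ) ≤ x₂ * s ^ (α - 1) := mul_nonneg hx₂.le (rpow_nonneg hs.1.le _)
      show x₂ * s ^ (α - 1) / ((x₁ - s) ^ 2 + x₂ ^ 2) ≤ x₂ * (s ^ (α - 1) / b ^ 2)
      rw [← mul_div_assoc]
      exact div_le_div_of_nonneg_left hnum (by positivity) hden
    calc (∫ s in Ioc 0 b, f x₂ s) ≤ ∫ s in Ioc 0 b, x₂ * (s ^ (α - 1) / b ^ 2) := step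
      _ = x₂ * C := by rw [integral_const_mul]
  have hA : Tendsto (fun x₂ : ℝ => ∫ s in Ioc 0 b, f x₂ s) (nhdsWithin 0 (Ioi 0)) (nhds 0) := by
    have hupper : Tendsto (fun x₂ : ℝ => x₂ * C) (nhdsWithin 0 (Ioi 0)) (nhds 0) := by
      have h := (tendsto_id.mul_const C : Tendsto (fun x₂ : ℝ => x₂ * C) (nhds 0) (nhds (0 * C)))
      rw [zero_mul] at h
      exact h.mono_left nhdsWithin_le_nhds
    refine tendsto_of_tendsto_of_tendsto_of_le_of_le' tendsto_const_nhds hupper ?_ ?_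
    · filter_upwards [self_mem_nhdsWithin] with x₂ hx₂ using hA0 x₂ hx₂
    · filter_upwards [self_mem_nhdsWithin] with x₂ hx₂ using hA_le x₂ hx₂
  -- B piece
  set K : ℝ → ℝ → ℝ := fun x₂ t => (x₁ + x₂ * t) ^ (α - 1) * (1 + t ^ 2)⁻¹ with hK
  set G : ℝ → ℝ → ℝ := fun x₂ => (Ioi ((b - x₁) / x₂)).indicator (K x₂) with hG
  have hBrep : ∀ x₂ : ℝ, 0 < x₂ → (∫ s in Ioi b, f x₂ s) = ∫ t, G x₂ t := by
    intro x₂ hx₂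
    rw [cov_Ioi (f x₂) b x₁ hx₂]
    have key : ∀ t : ℝ, f x₂ (x₁ + x₂ * t) = x₂⁻¹ * K x₂ t := by
      intro t
      have h2 : (0:ℝ) < 1 + t ^ 2 := by positivity
      simp only [hf, hK]
      rw [show (x₁ - (x₁ + x₂ * t)) ^ 2 + x₂ ^ 2 = x₂ ^ 2 * (1 + t ^ 2) by ring]
      field_simp
    simp_rw [key]
    rw [integral_const_mul, ← mul_assoc, mul_inv_cancel₀ hx₂.ne', one_mul,
      ← integral_indicator measurableSet_Ioi]
  have hbound_int : Integrable (fun t : ℝ => b ^ (α - 1) * (1 + t ^ 2)⁻¹) :=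
    integrable_inv_one_add_sq.const_mul _
  have hB : Tendsto (fun x₂ : ℝ => ∫ t, G x₂ t) (nhdsWithin 0 (Ioi 0))
      (nhds (Real.pi * x₁ ^ (α - 1))) := by
    have hlim_int : ∫ t : ℝ, x₁ ^ (α - 1) * (1 + t ^ 2)⁻¹ = Real.pi * x₁ ^ (α - 1) := by
      rw [integral_const_mul, integral_univ_inv_one_add_sq]; ring
    rw [← hlim_int]
    refine tendsto_integral_filter_of_dominated_convergence
      (fun t => b ^ (α - 1) * (1 + t ^ 2)⁻¹) ?_ ?_ hbound_int ?_
    · filter_upwards [self_mem_nhdsWithin] with x₂ _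
      exact ((by fun_prop : Measurable (K x₂)).indicator measurableSet_Ioi).aestronglyMeasurable
    · filter_upwards [self_mem_nhdsWithin] with x₂ hx₂
      refine Eventually.of_forall fun t => ?_
      by_cases ht : t ∈ Ioi ((b - x₁) / x₂)
      · have ht' : b - x₁ < t * x₂ := (div_lt_iff₀ hx₂).mp ht
        have hbase : b < x₁ + x₂ * t := by nlinarith
        have hb0 : (0:ℝ) ≤ (x₁ + x₂ * t) ^ (α - 1) := rpow_nonneg (by linarith) _
        show ‖(Ioi ((b - x₁) / x₂)).indicator (K x₂) t‖ ≤ b ^ (α - 1) * (1 + t ^ 2)⁻¹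
        rw [indicator_of_mem ht, Real.norm_eq_abs, abs_of_nonneg (by positivity)]
        exact mul_le_mul_of_nonneg_right
          (rpow_le_rpow_of_nonpos hb hbase.le he2) (by positivity)
      · show ‖(Ioi ((b - x₁) / x₂)).indicator (K x₂) t‖ ≤ b ^ (α - 1) * (1 + t ^ 2)⁻¹
        rw [indicator_of_notMem ht, norm_zero]
        have : (0:ℝ) ≤ b ^ (α - 1) := rpow_nonneg hb.le _
        positivity
    · refine Eventually.of_forall fun t => ?_
      have hlim1 : Tendsto (fun x₂ : ℝ => K x₂ t) (nhdsWithin 0 (Ioi 0))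
          (nhds (x₁ ^ (α - 1) * (1 + t ^ 2)⁻¹)) := by
        have hb1 : Tendsto (fun x₂ : ℝ => x₁ + x₂ * t) (nhds 0) (nhds x₁) := by
          have h := ((tendsto_id.mul_const t).const_add x₁ :
            Tendsto (fun x₂ : ℝ => x₁ + x₂ * t) (nhds 0) (nhds (x₁ + 0 * t)))
          simpa using h
        have hc : ContinuousAt (fun x : ℝ => x ^ (α - 1)) x₁ :=
          Real.continuousAt_rpow_const x₁ (α - 1) (Or.inl hx₁.ne')
        exact ((hc.tendsto.comp hb1).mul_const _).mono_left nhdsWithin_le_nhds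
      refine Tendsto.congr' ?_ hlim1
      have hδ : ∃ δ : ℝ, 0 < δ ∧ ∀ x₂ : ℝ, 0 < x₂ → x₂ < δ → (b - x₁) / x₂ < t := by
        by_cases htt : 0 ≤ t
        · refine ⟨1, one_pos, fun x₂ h0 _ => lt_of_lt_of_le ?_ htt⟩
          exact div_neg_of_neg_of_pos (by simp only [hbdef]; linarith) h0
        · push_neg at htt
          have hnt : (0:ℝ) < -t := neg_pos.mpr htt
          refine ⟨b / (-t), div_pos hb hnt, fun x₂ h0 hlt => ?_⟩
          rw [div_lt_iff₀ h0]
          have h2 : x₂ * (-t) < b := by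
            have h3 := mul_lt_mul_of_pos_right hlt hnt
            rwa [div_mul_cancel₀ _ hnt.ne'] at h3
          nlinarith
      obtain ⟨δ, hδ0, hδ⟩ := hδ
      filter_upwards [Ioo_mem_nhdsGT_of_mem ⟨le_refl (0:ℝ), hδ0⟩] with x₂ hx₂
      exact (indicator_of_mem (mem_Ioi.mpr (hδ x₂ hx₂.1 hx₂.2)) (K x₂)).symm
  -- combine
  have hcomb := hA.add hB
  rw [zero_add] at hcomb
  refine Tendsto.congr' ?_ hcomb
  filter_upwards [self_mem_nhdsWithin] with x₂ hx₂
  rw [hsplit x₂ hx₂, hBrep x₂ hx₂]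

/-- For fixed `x₁ > 0` and `α ∈ (0,1)`, as `x₂ → 0⁺` one has
`(1/(2π)) ∫₀^∞ x₂ s^(α−1)/((x₁−s)² + x₂²) ds → x₁^(α−1)/2`, and the limit as
`x₂ → 0⁻` equals `−x₁^(α−1)/2`. -/
theorem poisson_kernel_limit (x₁ α : ℝ) (hx₁ : 0 < x₁) (hα : α ∈ Set.Ioo (0:ℝ) 1) :
    Tendsto
      (fun x₂ : ℝ =>
        (1 / (2 * Real.pi)) *
          ∫ s in Set.Ioi (0:ℝ), x₂ * s ^ (α - 1) / ((x₁ - s) ^ 2 + x₂ ^ 2))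
      (nhdsWithin 0 (Set.Ioi 0)) (nhds (x₁ ^ (α - 1) / 2)) ∧
    Tendsto
      (fun x₂ : ℝ =>
        (1 / (2 * Real.pi)) *
          ∫ s in Set.Ioi (0:ℝ), x₂ * s ^ (α - 1) / ((x₁ - s) ^ 2 + x₂ ^ 2))
      (nhdsWithin 0 (Set.Iio 0)) (nhds (-(x₁ ^ (α - 1) / 2))) := by
  have hmain := pk_main x₁ α hx₁ hα
  have hpos : Tendsto
      (fun x₂ : ℝ =>
        (1 / (2 * Real.pi)) *
          ∫ s in Set.Ioi (0:ℝ), x₂ * s ^ (α - 1) / ((x₁ - s) ^ 2 + x₂ ^ 2))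
      (nhdsWithin 0 (Set.Ioi 0)) (nhds (x₁ ^ (α - 1) / 2)) := by
    have h := hmain.const_mul (1 / (2 * Real.pi))
    have heq : 1 / (2 * Real.pi) * (Real.pi * x₁ ^ (α - 1)) = x₁ ^ (α - 1) / 2 := by
      field_simp
    rwa [heq] at h
  refine ⟨hpos, ?_⟩
  have hneg_map : Tendsto (fun x₂ : ℝ => -x₂) (nhdsWithin 0 (Set.Iio 0))
      (nhdsWithin 0 (Set.Ioi 0)) := by
    refine tendsto_nhdsWithin_of_tendsto_nhds_of_eventually_within _ ?_ ?_
    · have h := (continuous_neg.tendsto (0:ℝ)).mono_left (nhdsWithin_le_nhds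
        (s := Set.Iio (0:ℝ)))
      simpa using h
    · filter_upwards [self_mem_nhdsWithin] with x hx
      exact mem_Ioi.mpr (neg_pos.mpr hx)
  have hcomp := hpos.comp hneg_map
  have h2 := hcomp.neg
  refine Tendsto.congr (fun x₂ => ?_) h2
  show -((1 / (2 * Real.pi)) *
      ∫ s in Set.Ioi (0:ℝ), (-x₂) * s ^ (α - 1) / ((x₁ - s) ^ 2 + (-x₂) ^ 2)) = _
  have key : ∀ s : ℝ, (-x₂) * s ^ (α - 1) / ((x₁ - s) ^ 2 + (-x₂) ^ 2)
      = -(x₂ * s ^ (α - 1) / ((x₁ - s) ^ 2 + x₂ ^ 2)) := fun s => by ring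
  simp_rw [key, integral_neg]
  ring
end

section
/- Fix x₁ > 0 and α ∈ (0,1). Then lim_{x₂→0} ∫₀^∞ (x₁ − s) s^(α−1) / ((x₁ − s)² + x₂²) ds = PV ∫₀^∞ s^(α−1)/(x₁ − s) ds, where the principal value is lim_{ε→0⁺} (∫₀^{x₁−ε} + ∫_{x₁+ε}^∞) of s^(α−1)/(x₁ − s) ds. -/
open MeasureTheory Filter Real Set

private lemma kern_abs_le {u A ε : ℝ} (hu : u ≠ 0) :
    |u * A / (u ^ 2 + ε ^ 2)| ≤ |A| / |u| := by
  have h1 : (0:ℝ) < u ^ 2 := by positivity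
  have h2 : (0:ℝ) < u ^ 2 + ε ^ 2 := by positivity
  rw [abs_div, abs_mul, abs_of_pos h2]
  calc |u| * |A| / (u ^ 2 + ε ^ 2) ≤ |u| * |A| / u ^ 2 := by
        gcongr
        nlinarith [sq_nonneg ε]
    _ = |A| / |u| := by
        rw [← sq_abs u, sq]
        exact mul_div_mul_left _ _ (abs_ne_zero.mpr hu)

private lemma kern_tendsto {u A : ℝ} (hu : u ≠ 0) :
    Tendsto (fun ε : ℝ => u * A / (u ^ 2 + ε ^ 2)) (nhds 0) (nhds (A / u)) := by
  have h : Tendsto (fun ε : ℝ => u ^ 2 + ε ^ 2) (nhds 0) (nhds (u ^ 2)) := by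
    have h0 : Tendsto (fun ε : ℝ => ε ^ 2) (nhds 0) (nhds ((0:ℝ) ^ 2)) :=
      (continuous_pow 2).tendsto 0
    simpa using tendsto_const_nhds.add h0
  have h2 : u ^ 2 ≠ 0 := pow_ne_zero 2 hu
  have heq : A / u = u * A / u ^ 2 := by field_simp
  rw [heq]
  exact tendsto_const_nhds.div h h2

private lemma mvt_rpow {x₁ α : ℝ} (hx₁ : 0 < x₁) (hα1 : α < 1) :
    ∀ s ∈ Icc (x₁/2) (2*x₁), |s ^ (α-1) - x₁ ^ (α-1)| ≤ ((1-α) * (x₁/2) ^ (α-2)) * |s - x₁| := by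
  intro s hs
  have hx₁mem : x₁ ∈ Icc (x₁/2) (2*x₁) := ⟨by linarith, by linarith⟩
  have := (convex_Icc (x₁/2) (2*x₁)).norm_image_sub_le_of_norm_hasDerivWithin_le
    (f := fun u : ℝ => u ^ (α-1)) (f' := fun u : ℝ => (α-1) * u ^ (α-2)) (C := (1-α) * (x₁/2) ^ (α-2))
    (fun u hu => ((Real.hasDerivAt_rpow_const (p := α - 1)
        (Or.inl (by nlinarith [hu.1] : u ≠ 0))).hasDerivWithinAt).congr_deriv (by ring_nf))
    (fun u hu => by
      have hu0 : (0:ℝ) < u := by nlinarith [hu.1]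
      have : u ^ (α-2) ≤ (x₁/2) ^ (α-2) :=
        Real.rpow_le_rpow_of_nonpos (by linarith) hu.1 (by linarith)
      rw [Real.norm_eq_abs, abs_mul, abs_of_nonpos (by linarith : α - 1 ≤ 0),
        abs_of_nonneg (Real.rpow_nonneg hu0.le _)]
      have h3 := mul_le_mul_of_nonneg_left this (show (0:ℝ) ≤ 1-α by linarith)
      linarith)
    hx₁mem hs
  simpa [Real.norm_eq_abs] using this

private lemma phi_nonneg {x₁ α : ℝ} (hx₁ : 0 < x₁) (hα1 : α < 1) {s : ℝ} (hs : 0 < s) :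
    0 ≤ (2/x₁) * (s ^ (α-1) + x₁ ^ (α-1)) + (1-α) * (x₁/2) ^ (α-2) := by
  have h1 : (0:ℝ) ≤ s ^ (α-1) := Real.rpow_nonneg hs.le _
  have h2 : (0:ℝ) ≤ x₁ ^ (α-1) := Real.rpow_nonneg hx₁.le _
  have h3 : (0:ℝ) ≤ (x₁/2) ^ (α-2) := Real.rpow_nonneg (by linarith) _
  have h4 : (0:ℝ) ≤ 2/x₁ := by positivity
  nlinarith

private lemma phi_integrable {x₁ α : ℝ} (hx₁ : 0 < x₁) (hα0 : 0 < α) :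
    IntegrableOn (fun s : ℝ => (2/x₁) * (s ^ (α-1) + x₁ ^ (α-1)) + (1-α) * (x₁/2) ^ (α-2))
      (Ioc 0 (2*x₁)) := by
  have h1 : IntegrableOn (fun s : ℝ => s ^ (α-1)) (Ioc 0 (2*x₁)) := by
    have := intervalIntegral.intervalIntegrable_rpow' (a := 0) (b := 2*x₁)
      (r := α - 1) (by linarith)
    exact (intervalIntegrable_iff_integrableOn_Ioc_of_le (by linarith)).mp this
  exact (((h1.add (integrableOn_const measure_Ioc_lt_top.ne)).const_mul _).add
    (integrableOn_const measure_Ioc_lt_top.ne))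

private lemma g_bound {x₁ α : ℝ} (hx₁ : 0 < x₁) (hα1 : α < 1)
    (hmvt : ∀ s ∈ Icc (x₁/2) (2*x₁),
      |s ^ (α-1) - x₁ ^ (α-1)| ≤ ((1-α) * (x₁/2) ^ (α-2)) * |s - x₁|) :
    ∀ s ∈ Ioc (0:ℝ) (2*x₁), |(s ^ (α-1) - x₁ ^ (α-1)) / (x₁ - s)| ≤
      (2/x₁) * (s ^ (α-1) + x₁ ^ (α-1)) + (1-α) * (x₁/2) ^ (α-2) := by
  intro s hs
  have h1 : (0:ℝ) ≤ s ^ (α-1) := Real.rpow_nonneg hs.1.le _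
  have h2 : (0:ℝ) ≤ x₁ ^ (α-1) := Real.rpow_nonneg hx₁.le _
  have h3 : (0:ℝ) ≤ (x₁/2) ^ (α-2) := Real.rpow_nonneg (by linarith) _
  rcases le_or_gt s (x₁/2) with hc | hc
  · -- away from x₁ on the left
    have hd : x₁ / 2 ≤ |x₁ - s| := by
      rw [abs_of_pos (by linarith)]; linarith
    have hnum : |s ^ (α-1) - x₁ ^ (α-1)| ≤ s ^ (α-1) + x₁ ^ (α-1) := by
      rw [abs_sub_le_iff]; constructor <;> linarith
    rw [abs_div]
    have hstep : |s ^ (α-1) - x₁ ^ (α-1)| / |x₁ - s| ≤ (s ^ (α-1) + x₁ ^ (α-1)) / (x₁/2) := by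
      apply div_le_div₀ (by positivity) hnum (by positivity) hd
    have : (s ^ (α-1) + x₁ ^ (α-1)) / (x₁/2) = (2/x₁) * (s ^ (α-1) + x₁ ^ (α-1)) := by
      field_simp
    nlinarith
  · rcases eq_or_ne s x₁ with hse | hne
    · rw [hse]
      simp only [sub_self, div_zero, abs_zero]
      exact phi_nonneg hx₁ hα1 hx₁
    · have hd : 0 < |x₁ - s| := by
        rw [abs_pos]; intro h; exact hne (by linarith)
      have hm := hmvt s ⟨hc.le, hs.2⟩
      rw [abs_div, div_le_iff₀ hd]
      calc |s ^ (α-1) - x₁ ^ (α-1)| ≤ ((1-α) * (x₁/2) ^ (α-2)) * |s - x₁| := hm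
        _ = ((1-α) * (x₁/2) ^ (α-2)) * |x₁ - s| := by rw [abs_sub_comm]
        _ ≤ ((2/x₁) * (s ^ (α-1) + x₁ ^ (α-1)) + (1-α) * (x₁/2) ^ (α-2)) * |x₁ - s| := by
            have h4 : (0:ℝ) ≤ 2/x₁ := by positivity
            apply mul_le_mul_of_nonneg_right _ hd.le
            nlinarith

private lemma g_integrable {x₁ α : ℝ} (hx₁ : 0 < x₁) (hα0 : 0 < α) (hα1 : α < 1)
    (hmvt : ∀ s ∈ Icc (x₁/2) (2*x₁),
      |s ^ (α-1) - x₁ ^ (α-1)| ≤ ((1-α) * (x₁/2) ^ (α-2)) * |s - x₁|) :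
    IntegrableOn (fun s : ℝ => (s ^ (α-1) - x₁ ^ (α-1)) / (x₁ - s)) (Ioc 0 (2*x₁)) := by
  apply (phi_integrable hx₁ hα0).mono' (f := fun s : ℝ => (s ^ (α-1) - x₁ ^ (α-1)) / (x₁ - s))
  · apply Measurable.aestronglyMeasurable
    fun_prop
  · rw [ae_restrict_iff' measurableSet_Ioc]
    exact ae_of_all _ fun s hs => by
      simpa [Real.norm_eq_abs, abs_div] using g_bound hx₁ hα1 hmvt s hs

private lemma tail_bound {x₁ α : ℝ} (hx₁ : 0 < x₁) {s : ℝ} (hs : s ∈ Ioi (2*x₁)) :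
    s ^ (α-1) / |x₁ - s| ≤ 2 * s ^ (α-2) := by
  have hss : 2*x₁ < s := hs
  have hs0 : (0:ℝ) < s := by linarith
  have habs : |x₁ - s| = s - x₁ := by rw [abs_of_neg (by linarith : x₁ - s < 0)]; ring
  have h2 : s/2 ≤ s - x₁ := by linarith
  have hr : s ^ (α-1) = s ^ (α-2) * s := by
    have he : α - 1 = (α-2) + 1 := by ring
    rw [he, Real.rpow_add_one hs0.ne']
  rw [habs, hr]
  calc s ^ (α-2) * s / (s-x₁) ≤ s ^ (α-2) * s / (s/2) := by
        gcongr
    _ = 2 * s ^ (α-2) := by field_simp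

private lemma t_integrable {x₁ α : ℝ} (hx₁ : 0 < x₁) (hα1 : α < 1) :
    IntegrableOn (fun s : ℝ => s ^ (α-1) / (x₁ - s)) (Ioi (2*x₁)) := by
  have hbase : IntegrableOn (fun s : ℝ => 2 * s ^ (α-2)) (Ioi (2*x₁)) :=
    (integrableOn_Ioi_rpow_of_lt (by linarith) (by linarith)).const_mul 2
  apply hbase.mono'
  · apply Measurable.aestronglyMeasurable; fun_prop
  · rw [ae_restrict_iff' measurableSet_Ioi]
    refine ae_of_all _ fun s hs => ?_
    have hs0 : (0:ℝ) < s := by have : 2*x₁ < s := hs; linarith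
    rw [Real.norm_eq_abs, abs_div, abs_of_nonneg (Real.rpow_nonneg hs0.le _)]
    exact tail_bound hx₁ hs

private lemma k_integrable_tail {x₁ α : ℝ} (hx₁ : 0 < x₁) (hα1 : α < 1) (ε : ℝ) :
    IntegrableOn (fun s : ℝ => (x₁ - s) * s ^ (α-1) / ((x₁ - s) ^ 2 + ε ^ 2))
      (Ioi (2*x₁)) := by
  have hbase : IntegrableOn (fun s : ℝ => 2 * s ^ (α-2)) (Ioi (2*x₁)) :=
    (integrableOn_Ioi_rpow_of_lt (by linarith) (by linarith)).const_mul 2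
  apply hbase.mono'
  · apply Measurable.aestronglyMeasurable; fun_prop
  · rw [ae_restrict_iff' measurableSet_Ioi]
    refine ae_of_all _ fun s hs => ?_
    have hss : 2*x₁ < s := hs
    have hs0 : (0:ℝ) < s := by linarith
    have hu : x₁ - s ≠ 0 := by intro h; linarith [sub_eq_zero.mp h]
    calc ‖(x₁ - s) * s ^ (α-1) / ((x₁ - s) ^ 2 + ε ^ 2)‖
        ≤ |s ^ (α-1)| / |x₁ - s| := by rw [Real.norm_eq_abs]; exact kern_abs_le hu
      _ = s ^ (α-1) / |x₁ - s| := by rw [abs_of_nonneg (Real.rpow_nonneg hs0.le _)]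
      _ ≤ 2 * s ^ (α-2) := tail_bound hx₁ hs

private lemma tail_tendsto {x₁ α : ℝ} (hx₁ : 0 < x₁) (hα1 : α < 1) :
    Tendsto (fun ε : ℝ => ∫ s in Ioi (2*x₁), (x₁ - s) * s ^ (α-1) / ((x₁ - s) ^ 2 + ε ^ 2))
      (nhdsWithin (0:ℝ) {(0:ℝ)}ᶜ)
      (nhds (∫ s in Ioi (2*x₁), s ^ (α-1) / (x₁ - s))) := by
  apply tendsto_integral_filter_of_dominated_convergence (fun s : ℝ => 2 * s ^ (α-2))
  · exact Eventually.of_forall fun ε => (by fun_prop :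
      Measurable fun s : ℝ => (x₁ - s) * s ^ (α-1) / ((x₁ - s) ^ 2 + ε ^ 2)).aestronglyMeasurable
  · refine Eventually.of_forall fun ε => ?_
    rw [ae_restrict_iff' measurableSet_Ioi]
    refine ae_of_all _ fun s hs => ?_
    have hss : 2*x₁ < s := hs
    have hs0 : (0:ℝ) < s := by linarith
    have hu : x₁ - s ≠ 0 := by intro h; linarith [sub_eq_zero.mp h]
    calc ‖(x₁ - s) * s ^ (α-1) / ((x₁ - s) ^ 2 + ε ^ 2)‖
        ≤ |s ^ (α-1)| / |x₁ - s| := by rw [Real.norm_eq_abs]; exact kern_abs_le hu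
      _ = s ^ (α-1) / |x₁ - s| := by rw [abs_of_nonneg (Real.rpow_nonneg hs0.le _)]
      _ ≤ 2 * s ^ (α-2) := tail_bound hx₁ hs
  · exact (integrableOn_Ioi_rpow_of_lt (by linarith) (by linarith)).const_mul 2
  · rw [ae_restrict_iff' measurableSet_Ioi]
    refine ae_of_all _ fun s hs => ?_
    have hss : 2*x₁ < s := hs
    have hu : x₁ - s ≠ 0 := by intro h; linarith [sub_eq_zero.mp h]
    exact (kern_tendsto hu).mono_left nhdsWithin_le_nhds

private lemma odd_zero {x₁ ε : ℝ} (hx₁ : 0 < x₁) :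
    ∫ s in Ioc (0:ℝ) (2*x₁), (x₁ - s) / ((x₁ - s)^2 + ε^2) = 0 := by
  have key : (∫ u in (-x₁)..x₁, u/(u^2+ε^2)) = 0 := by
    have h3 : (∫ x in (-x₁)..x₁, (-x)/((-x)^2+ε^2)) = ∫ x in (-x₁)..x₁, x/(x^2+ε^2) := by
      have := intervalIntegral.integral_comp_neg (a := -x₁) (b := x₁)
        (fun u : ℝ => u/(u^2+ε^2))
      simpa using this
    have h4 : (∫ x in (-x₁)..x₁, (-x)/((-x)^2+ε^2)) = -(∫ x in (-x₁)..x₁, x/(x^2+ε^2)) := by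
      rw [← intervalIntegral.integral_neg]
      apply intervalIntegral.integral_congr
      intro x _
      simp only []
      rw [neg_sq, neg_div]
    linarith
  have h1 : (∫ s in Ioc (0:ℝ) (2*x₁), (x₁ - s)/((x₁-s)^2+ε^2))
      = ∫ s in (0:ℝ)..(2*x₁), (x₁ - s)/((x₁-s)^2+ε^2) :=
    (intervalIntegral.integral_of_le (by linarith)).symm
  have h2 : (∫ s in (0:ℝ)..(2*x₁), (x₁ - s)/((x₁-s)^2+ε^2))
      = ∫ u in (x₁-2*x₁)..(x₁-0), u/(u^2+ε^2) :=
    intervalIntegral.integral_comp_sub_left (fun u : ℝ => u/(u^2+ε^2)) x₁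
  have hb1 : x₁ - 2*x₁ = -x₁ := by ring
  have hb2 : x₁ - 0 = x₁ := by ring
  rw [h1, h2, hb1, hb2, key]

private lemma log_cancel {x₁ ε : ℝ} (hx₁ : 0 < x₁) (hε : 0 < ε) (hεx : ε < x₁) :
    (∫ s in (0:ℝ)..(x₁-ε), 1/(x₁-s)) + (∫ s in (x₁+ε)..(2*x₁), 1/(x₁-s)) = 0 := by
  have e1 : (∫ s in (0:ℝ)..(x₁-ε), 1/(x₁-s)) = ∫ u in (x₁-(x₁-ε))..(x₁-0), 1/u :=
    intervalIntegral.integral_comp_sub_left (fun u : ℝ => 1/u) x₁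
  have e2 : (∫ s in (x₁+ε)..(2*x₁), 1/(x₁-s)) = ∫ u in (x₁-2*x₁)..(x₁-(x₁+ε)), 1/u :=
    intervalIntegral.integral_comp_sub_left (fun u : ℝ => 1/u) x₁
  have hb1 : x₁ - (x₁ - ε) = ε := by ring
  have hb2 : x₁ - 0 = x₁ := by ring
  have hb3 : x₁ - 2*x₁ = -x₁ := by ring
  have hb4 : x₁ - (x₁ + ε) = -ε := by ring
  rw [e1, e2, hb1, hb2, hb3, hb4]
  rw [integral_one_div (Set.notMem_uIcc_of_lt hε hx₁),
    integral_one_div (Set.notMem_uIcc_of_gt (by linarith) (by linarith))]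
  rw [← Real.log_mul (by positivity) (by
      apply div_ne_zero <;> [skip; skip] <;> simp [hε.ne', hx₁.ne'] )]
  have : x₁ / ε * (-ε / -x₁) = 1 := by field_simp
  rw [this, Real.log_one]

private lemma ae_ne_pt (c : ℝ) (T : Set ℝ) : ∀ᵐ s ∂(volume.restrict T), s ≠ c := by
  apply ae_restrict_of_ae
  rw [ae_iff]
  simpa using measure_singleton c

private lemma ioc_tendsto {x₁ α : ℝ} (hx₁ : 0 < x₁) (hα0 : 0 < α) (hα1 : α < 1)
    (hmvt : ∀ s ∈ Icc (x₁/2) (2*x₁),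
      |s ^ (α-1) - x₁ ^ (α-1)| ≤ ((1-α) * (x₁/2) ^ (α-2)) * |s - x₁|) :
    Tendsto (fun ε : ℝ =>
        ∫ s in Ioc (0:ℝ) (2*x₁), (x₁ - s) * (s ^ (α-1) - x₁ ^ (α-1)) / ((x₁ - s) ^ 2 + ε ^ 2))
      (nhdsWithin (0:ℝ) {(0:ℝ)}ᶜ)
      (nhds (∫ s in Ioc (0:ℝ) (2*x₁), (s ^ (α-1) - x₁ ^ (α-1)) / (x₁ - s))) := by
  apply tendsto_integral_filter_of_dominated_convergence
    (fun s : ℝ => (2/x₁) * (s ^ (α-1) + x₁ ^ (α-1)) + (1-α) * (x₁/2) ^ (α-2))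
  · exact Eventually.of_forall fun ε => (by fun_prop : Measurable fun s : ℝ =>
      (x₁ - s) * (s ^ (α-1) - x₁ ^ (α-1)) / ((x₁ - s) ^ 2 + ε ^ 2)).aestronglyMeasurable
  · refine Eventually.of_forall fun ε => ?_
    filter_upwards [ae_restrict_mem measurableSet_Ioc, ae_ne_pt x₁ _] with s hs hne
    have hu : x₁ - s ≠ 0 := fun h => hne (by linarith [sub_eq_zero.mp h])
    calc ‖(x₁ - s) * (s ^ (α-1) - x₁ ^ (α-1)) / ((x₁ - s) ^ 2 + ε ^ 2)‖
        ≤ |s ^ (α-1) - x₁ ^ (α-1)| / |x₁ - s| := by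
          rw [Real.norm_eq_abs]; exact kern_abs_le hu
      _ = |(s ^ (α-1) - x₁ ^ (α-1)) / (x₁ - s)| := (abs_div _ _).symm
      _ ≤ _ := g_bound hx₁ hα1 hmvt s hs
  · exact phi_integrable hx₁ hα0
  · filter_upwards [ae_ne_pt x₁ (Ioc (0:ℝ) (2*x₁))] with s hne
    have hu : x₁ - s ≠ 0 := fun h => hne (by linarith [sub_eq_zero.mp h])
    exact (kern_tendsto hu).mono_left nhdsWithin_le_nhds

private lemma g_trunc_tendsto {x₁ α : ℝ} (hx₁ : 0 < x₁) (hα0 : 0 < α) (hα1 : α < 1)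
    (hmvt : ∀ s ∈ Icc (x₁/2) (2*x₁),
      |s ^ (α-1) - x₁ ^ (α-1)| ≤ ((1-α) * (x₁/2) ^ (α-2)) * |s - x₁|) :
    Tendsto (fun ε : ℝ =>
        (∫ s in Ioc (0:ℝ) (x₁-ε), (s ^ (α-1) - x₁ ^ (α-1)) / (x₁ - s)) +
        ∫ s in Ioc (x₁+ε) (2*x₁), (s ^ (α-1) - x₁ ^ (α-1)) / (x₁ - s))
      (nhdsWithin (0:ℝ) (Ioi 0))
      (nhds (∫ s in Ioc (0:ℝ) (2*x₁), (s ^ (α-1) - x₁ ^ (α-1)) / (x₁ - s))) := by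
  set g : ℝ → ℝ := fun s => (s ^ (α-1) - x₁ ^ (α-1)) / (x₁ - s) with hg
  have hgmeas : Measurable g := by rw [hg]; fun_prop
  have hSmeas : ∀ ε : ℝ, MeasurableSet (Ioc (0:ℝ) (x₁-ε) ∪ Ioc (x₁+ε) (2*x₁)) :=
    fun ε => measurableSet_Ioc.union measurableSet_Ioc
  have hDCT : Tendsto (fun ε : ℝ =>
      ∫ s in Ioc (0:ℝ) (2*x₁), (Ioc (0:ℝ) (x₁-ε) ∪ Ioc (x₁+ε) (2*x₁)).indicator g s)
      (nhdsWithin (0:ℝ) (Ioi 0)) (nhds (∫ s in Ioc (0:ℝ) (2*x₁), g s)) := by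
    apply tendsto_integral_filter_of_dominated_convergence
      (fun s : ℝ => (2/x₁) * (s ^ (α-1) + x₁ ^ (α-1)) + (1-α) * (x₁/2) ^ (α-2))
    · exact Eventually.of_forall fun ε =>
        ((hgmeas.indicator (hSmeas ε))).aestronglyMeasurable
    · refine Eventually.of_forall fun ε => ?_
      filter_upwards [ae_restrict_mem measurableSet_Ioc] with s hs
      calc ‖(Ioc (0:ℝ) (x₁-ε) ∪ Ioc (x₁+ε) (2*x₁)).indicator g s‖ ≤ ‖g s‖ :=
            norm_indicator_le_norm_self _ _
        _ ≤ _ := by rw [Real.norm_eq_abs]; exact g_bound hx₁ hα1 hmvt s hs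
    · exact phi_integrable hx₁ hα0
    · filter_upwards [ae_restrict_mem measurableSet_Ioc, ae_ne_pt x₁ _] with s hs hne
      have habs : 0 < |x₁ - s| := abs_pos.mpr (fun h => hne (by linarith [sub_eq_zero.mp h]))
      have hev : ∀ᶠ ε in nhdsWithin (0:ℝ) (Ioi 0), ε ∈ Ioo 0 |x₁ - s| :=
        Ioo_mem_nhdsGT_of_mem ⟨le_refl 0, habs⟩
      apply Tendsto.congr' _ (tendsto_const_nhds (x := g s))
      filter_upwards [hev] with ε hε
      have hmem : s ∈ Ioc (0:ℝ) (x₁-ε) ∪ Ioc (x₁+ε) (2*x₁) := by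
        rcases lt_or_gt_of_ne hne with hlt | hgt
        · left
          have : |x₁ - s| = x₁ - s := abs_of_pos (by linarith)
          exact ⟨hs.1, by rw [this] at hε; linarith [hε.2]⟩
        · right
          have : |x₁ - s| = s - x₁ := by rw [abs_of_neg (by linarith)]; ring
          exact ⟨by rw [this] at hε; linarith [hε.2], hs.2⟩
      exact (indicator_of_mem hmem g).symm
  apply Tendsto.congr' _ hDCT
  filter_upwards [Ioo_mem_nhdsGT_of_mem (show (0:ℝ) ∈ Ico (0:ℝ) x₁ from ⟨le_refl 0, hx₁⟩)]
    with ε hε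
  have hsub : Ioc (0:ℝ) (x₁-ε) ∪ Ioc (x₁+ε) (2*x₁) ⊆ Ioc (0:ℝ) (2*x₁) := by
    apply union_subset
    · exact Ioc_subset_Ioc (le_refl 0) (by linarith [hε.1])
    · exact Ioc_subset_Ioc (by linarith [hε.1]) (le_refl _)
  have hdisj : Disjoint (Ioc (0:ℝ) (x₁-ε)) (Ioc (x₁+ε) (2*x₁)) := by
    rw [Set.Ioc_disjoint_Ioc]
    have h1 : min (x₁-ε) (2*x₁) ≤ x₁ - ε := min_le_left _ _
    have h2 : (x₁ + ε : ℝ) ≤ max 0 (x₁+ε) := le_max_right _ _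
    have := hε.1
    linarith
  have hint1 : IntegrableOn (g) (Ioc (0:ℝ) (x₁-ε)) := (g_integrable hx₁ hα0 hα1 hmvt).mono_set
    (Ioc_subset_Ioc (le_refl 0) (by linarith [hε.1]))
  have hint2 : IntegrableOn (g) (Ioc (x₁+ε) (2*x₁)) := (g_integrable hx₁ hα0 hα1 hmvt).mono_set
    (Ioc_subset_Ioc (by linarith [hε.1]) (le_refl _))
  rw [integral_indicator (hSmeas ε), Measure.restrict_restrict (hSmeas ε),
    inter_eq_self_of_subset_left hsub,
    setIntegral_union hdisj measurableSet_Ioc hint1 hint2]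

private lemma q_integrable {x₁ α : ℝ} (ε : ℝ) (hx₁ : 0 < x₁) (hα0 : 0 < α) (hα1 : α < 1)
    (hmvt : ∀ s ∈ Icc (x₁/2) (2*x₁),
      |s ^ (α-1) - x₁ ^ (α-1)| ≤ ((1-α) * (x₁/2) ^ (α-2)) * |s - x₁|) :
    IntegrableOn (fun s : ℝ => (x₁ - s) * (s ^ (α-1) - x₁ ^ (α-1)) / ((x₁ - s) ^ 2 + ε ^ 2))
      (Ioc 0 (2*x₁)) := by
  apply (phi_integrable hx₁ hα0).mono'
  · apply Measurable.aestronglyMeasurable; fun_prop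
  · filter_upwards [ae_restrict_mem measurableSet_Ioc, ae_ne_pt x₁ _] with s hs hne
    have hu : x₁ - s ≠ 0 := fun h => hne (by linarith [sub_eq_zero.mp h])
    calc ‖(x₁ - s) * (s ^ (α-1) - x₁ ^ (α-1)) / ((x₁ - s) ^ 2 + ε ^ 2)‖
        ≤ |s ^ (α-1) - x₁ ^ (α-1)| / |x₁ - s| := by
          rw [Real.norm_eq_abs]; exact kern_abs_le hu
      _ = |(s ^ (α-1) - x₁ ^ (α-1)) / (x₁ - s)| := (abs_div _ _).symm
      _ ≤ _ := g_bound hx₁ hα1 hmvt s hs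

private lemma k_ioc {x₁ α ε : ℝ} (hx₁ : 0 < x₁) (hα0 : 0 < α) (hα1 : α < 1) (hε : ε ≠ 0)
    (hmvt : ∀ s ∈ Icc (x₁/2) (2*x₁),
      |s ^ (α-1) - x₁ ^ (α-1)| ≤ ((1-α) * (x₁/2) ^ (α-2)) * |s - x₁|) :
    IntegrableOn (fun s : ℝ => (x₁ - s) * s ^ (α-1) / ((x₁ - s) ^ 2 + ε ^ 2))
      (Ioc 0 (2*x₁)) ∧
    (∫ s in Ioc (0:ℝ) (2*x₁), (x₁ - s) * s ^ (α-1) / ((x₁ - s) ^ 2 + ε ^ 2))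
      = ∫ s in Ioc (0:ℝ) (2*x₁),
          (x₁ - s) * (s ^ (α-1) - x₁ ^ (α-1)) / ((x₁ - s) ^ 2 + ε ^ 2) := by
  have hden : ∀ s : ℝ, ((x₁ - s) ^ 2 + ε ^ 2) ≠ 0 := fun s => by positivity
  have hcont : Continuous fun s : ℝ => x₁ ^ (α-1) * ((x₁ - s) / ((x₁ - s) ^ 2 + ε ^ 2)) := by
    apply Continuous.mul continuous_const
    exact Continuous.div (by fun_prop) (by fun_prop) hden
  have hI1 : IntegrableOn (fun s : ℝ => x₁ ^ (α-1) * ((x₁ - s) / ((x₁ - s) ^ 2 + ε ^ 2)))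
      (Ioc 0 (2*x₁)) := hcont.integrableOn_Ioc
  have hI2 := q_integrable (x₁ := x₁) (α := α) ε hx₁ hα0 hα1 hmvt
  have hident : ∀ s : ℝ, (x₁ - s) * s ^ (α-1) / ((x₁ - s) ^ 2 + ε ^ 2)
      = x₁ ^ (α-1) * ((x₁ - s) / ((x₁ - s) ^ 2 + ε ^ 2))
        + (x₁ - s) * (s ^ (α-1) - x₁ ^ (α-1)) / ((x₁ - s) ^ 2 + ε ^ 2) := fun s => by ring
  constructor
  · exact (hI1.add hI2).congr (ae_of_all _ fun s => (hident s).symm)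
  · rw [setIntegral_congr_fun measurableSet_Ioc (fun s _ => hident s),
      integral_add hI1 hI2, integral_const_mul, odd_zero hx₁, mul_zero, zero_add]

private lemma pv_decomp {x₁ α ε : ℝ} (hx₁ : 0 < x₁) (hα0 : 0 < α) (hα1 : α < 1)
    (hε : 0 < ε) (hεx : ε < x₁)
    (hmvt : ∀ s ∈ Icc (x₁/2) (2*x₁),
      |s ^ (α-1) - x₁ ^ (α-1)| ≤ ((1-α) * (x₁/2) ^ (α-2)) * |s - x₁|) :
    (∫ s in (0:ℝ)..(x₁-ε), s ^ (α-1) / (x₁ - s)) +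
      (∫ s in Ioi (x₁+ε), s ^ (α-1) / (x₁ - s))
    = ((∫ s in Ioc (0:ℝ) (x₁-ε), (s ^ (α-1) - x₁ ^ (α-1)) / (x₁ - s))
        + ∫ s in Ioc (x₁+ε) (2*x₁), (s ^ (α-1) - x₁ ^ (α-1)) / (x₁ - s))
      + ∫ s in Ioi (2*x₁), s ^ (α-1) / (x₁ - s) := by
  have hident : ∀ s : ℝ, s ^ (α-1) / (x₁ - s)
      = x₁ ^ (α-1) * (1/(x₁ - s)) + (s ^ (α-1) - x₁ ^ (α-1)) / (x₁ - s) := fun s => by ring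
  -- integrability of the 1/(x₁-s) pieces
  have hc1 : IntegrableOn (fun s : ℝ => x₁ ^ (α-1) * (1/(x₁ - s))) (Ioc 0 (x₁-ε)) := by
    apply (ContinuousOn.integrableOn_compact (isCompact_Icc (a := (0:ℝ)) (b := x₁-ε)) ?_).mono_set
      Ioc_subset_Icc_self
    apply ContinuousOn.mul continuousOn_const
    apply ContinuousOn.div continuousOn_const (by fun_prop)
    intro s hs
    have := hs.2
    intro h; have : x₁ = s := by linarith [sub_eq_zero.mp h]
    linarith [hs.2]
  have hc2 : IntegrableOn (fun s : ℝ => x₁ ^ (α-1) * (1/(x₁ - s))) (Ioc (x₁+ε) (2*x₁)) := by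
    apply (ContinuousOn.integrableOn_compact
      (isCompact_Icc (a := x₁+ε) (b := 2*x₁)) ?_).mono_set Ioc_subset_Icc_self
    apply ContinuousOn.mul continuousOn_const
    apply ContinuousOn.div continuousOn_const (by fun_prop)
    intro s hs h
    have : x₁ = s := by linarith [sub_eq_zero.mp h]
    linarith [hs.1]
  have hg1 : IntegrableOn (fun s : ℝ => (s ^ (α-1) - x₁ ^ (α-1)) / (x₁ - s)) (Ioc 0 (x₁-ε)) :=
    (g_integrable hx₁ hα0 hα1 hmvt).mono_set (Ioc_subset_Ioc (le_refl 0) (by linarith))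
  have hg2 : IntegrableOn (fun s : ℝ => (s ^ (α-1) - x₁ ^ (α-1)) / (x₁ - s))
      (Ioc (x₁+ε) (2*x₁)) :=
    (g_integrable hx₁ hα0 hα1 hmvt).mono_set (Ioc_subset_Ioc (by linarith) (le_refl _))
  -- t integrable on middle
  have htmid : IntegrableOn (fun s : ℝ => s ^ (α-1) / (x₁ - s)) (Ioc (x₁+ε) (2*x₁)) := by
    refine ((hc2.add hg2).congr (ae_of_all _ fun s => ?_))
    exact (hident s).symm
  -- split the Ioi integral
  have hsplit : (∫ s in Ioi (x₁+ε), s ^ (α-1) / (x₁ - s))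
      = (∫ s in Ioc (x₁+ε) (2*x₁), s ^ (α-1) / (x₁ - s))
        + ∫ s in Ioi (2*x₁), s ^ (α-1) / (x₁ - s) := by
    rw [← setIntegral_union (Ioc_disjoint_Ioi le_rfl) measurableSet_Ioi htmid
      (t_integrable hx₁ hα1), Ioc_union_Ioi_eq_Ioi (by linarith : x₁+ε ≤ 2*x₁)]
  -- decompose left integral
  have hL : (∫ s in (0:ℝ)..(x₁-ε), s ^ (α-1) / (x₁ - s))
      = x₁ ^ (α-1) * (∫ s in (0:ℝ)..(x₁-ε), 1/(x₁ - s))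
        + ∫ s in Ioc (0:ℝ) (x₁-ε), (s ^ (α-1) - x₁ ^ (α-1)) / (x₁ - s) := by
    rw [intervalIntegral.integral_of_le (by linarith : (0:ℝ) ≤ x₁-ε),
      intervalIntegral.integral_of_le (by linarith : (0:ℝ) ≤ x₁-ε),
      setIntegral_congr_fun measurableSet_Ioc (fun s _ => hident s),
      integral_add hc1 hg1, integral_const_mul]
  have hM : (∫ s in Ioc (x₁+ε) (2*x₁), s ^ (α-1) / (x₁ - s))
      = x₁ ^ (α-1) * (∫ s in (x₁+ε)..(2*x₁), 1/(x₁ - s))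
        + ∫ s in Ioc (x₁+ε) (2*x₁), (s ^ (α-1) - x₁ ^ (α-1)) / (x₁ - s) := by
    rw [intervalIntegral.integral_of_le (by linarith : x₁+ε ≤ 2*x₁),
      setIntegral_congr_fun measurableSet_Ioc (fun s _ => hident s),
      integral_add hc2 hg2, integral_const_mul]
  have hcancel := log_cancel hx₁ hε hεx
  rw [hL, hsplit, hM]
  have h0 : x₁ ^ (α-1) * ((∫ s in (0:ℝ)..(x₁-ε), 1/(x₁-s))
      + ∫ s in (x₁+ε)..(2*x₁), 1/(x₁-s)) = 0 := by rw [hcancel, mul_zero]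
  rw [mul_add] at h0
  linarith

/-- For fixed `x₁ > 0` and `α ∈ (0,1)`,
`lim_{x₂→0} ∫₀^∞ (x₁−s) s^(α−1)/((x₁−s)² + x₂²) ds = PV ∫₀^∞ s^(α−1)/(x₁−s) ds`,
where the principal value is `lim_{ε→0⁺} (∫₀^{x₁−ε} + ∫_{x₁+ε}^∞) s^(α−1)/(x₁−s) ds`. -/
theorem conjugate_kernel_limit (x₁ α : ℝ) (hx₁ : 0 < x₁) (hα : α ∈ Set.Ioo (0:ℝ) 1)
    (L : ℝ)
    (hPV : Tendsto
      (fun ε : ℝ =>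
        (∫ s in (0:ℝ)..(x₁ - ε), s ^ (α - 1) / (x₁ - s)) +
        ∫ s in Set.Ioi (x₁ + ε), s ^ (α - 1) / (x₁ - s))
      (nhdsWithin 0 (Set.Ioi 0)) (nhds L)) :
    Tendsto
      (fun x₂ : ℝ =>
        ∫ s in Set.Ioi (0:ℝ), (x₁ - s) * s ^ (α - 1) / ((x₁ - s) ^ 2 + x₂ ^ 2))
      (nhdsWithin 0 {(0:ℝ)}ᶜ) (nhds L) := by
  obtain ⟨hα0, hα1⟩ := hα
  have hmvt := mvt_rpow hx₁ hα1
  set G : ℝ := ∫ s in Ioc (0:ℝ) (2*x₁), (s ^ (α-1) - x₁ ^ (α-1)) / (x₁ - s) with hG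
  set T : ℝ := ∫ s in Ioi (2*x₁), s ^ (α-1) / (x₁ - s) with hT
  -- the PV limit equals G + T
  have hPVlim : Tendsto
      (fun ε : ℝ =>
        (∫ s in (0:ℝ)..(x₁ - ε), s ^ (α - 1) / (x₁ - s)) +
        ∫ s in Set.Ioi (x₁ + ε), s ^ (α - 1) / (x₁ - s))
      (nhdsWithin 0 (Set.Ioi 0)) (nhds (G + T)) := by
    have h1 : Tendsto (fun ε : ℝ =>
        ((∫ s in Ioc (0:ℝ) (x₁-ε), (s ^ (α-1) - x₁ ^ (α-1)) / (x₁ - s)) +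
          ∫ s in Ioc (x₁+ε) (2*x₁), (s ^ (α-1) - x₁ ^ (α-1)) / (x₁ - s)) + T)
        (nhdsWithin 0 (Set.Ioi 0)) (nhds (G + T)) :=
      (g_trunc_tendsto hx₁ hα0 hα1 hmvt).add tendsto_const_nhds
    apply Tendsto.congr' _ h1
    filter_upwards [Ioo_mem_nhdsGT_of_mem
      (show (0:ℝ) ∈ Ico (0:ℝ) x₁ from ⟨le_refl 0, hx₁⟩)] with ε hε
    exact (pv_decomp hx₁ hα0 hα1 hε.1 hε.2 hmvt).symm
  have hL : L = G + T := tendsto_nhds_unique hPV hPVlim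
  rw [hL]
  have hFlim : Tendsto (fun ε : ℝ =>
      (∫ s in Ioc (0:ℝ) (2*x₁),
        (x₁ - s) * (s ^ (α-1) - x₁ ^ (α-1)) / ((x₁ - s) ^ 2 + ε ^ 2)) +
      ∫ s in Ioi (2*x₁), (x₁ - s) * s ^ (α-1) / ((x₁ - s) ^ 2 + ε ^ 2))
      (nhdsWithin (0:ℝ) {(0:ℝ)}ᶜ) (nhds (G + T)) :=
    (ioc_tendsto hx₁ hα0 hα1 hmvt).add (tail_tendsto hx₁ hα1)
  apply Tendsto.congr' _ hFlim
  filter_upwards [self_mem_nhdsWithin] with ε hε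
  have hεne : ε ≠ 0 := hε
  obtain ⟨hkIoc, hkeq⟩ := k_ioc hx₁ hα0 hα1 hεne hmvt
  rw [← hkeq, ← setIntegral_union (Ioc_disjoint_Ioi le_rfl) measurableSet_Ioi hkIoc
    (k_integrable_tail hx₁ hα1 ε), Ioc_union_Ioi_eq_Ioi (by linarith : (0:ℝ) ≤ 2*x₁)]
end

section
/- For x₁ > 0, α ∈ (0,1), and 0 < ε < x₁/2, the function s ↦ (s^(α−1) − (2x₁ − s)^(α−1))/(x₁ − s) is integrable on [x₁ − ε, x₁], and ∫_{x₁−ε}^{x₁} |(s^(α−1) − (2x₁−s)^(α−1))/(x₁ − s)| ds ≤ C (x₁^(α−1) − (x₁−ε)^(α−1))/(α−1) for a constant C depending only on α. -/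
open MeasureTheory Filter Real Set

/-- For `x₁ > 0`, `α ∈ (0,1)` and `0 < ε < x₁/2`, the function
`s ↦ (s^(α−1) − (2x₁−s)^(α−1))/(x₁−s)` is integrable on `[x₁−ε, x₁]` and its
`L¹`-norm there is bounded by `C (x₁^(α−1) − (x₁−ε)^(α−1))/(α−1)` with `C = C(α)`. -/
theorem integrable_difference_quotient (α : ℝ) (hα : α ∈ Set.Ioo (0:ℝ) 1) :
    ∃ C : ℝ, 0 < C ∧ ∀ x₁ ε : ℝ, 0 < x₁ → 0 < ε → ε < x₁ / 2 →
      IntegrableOn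
        (fun s : ℝ => (s ^ (α - 1) - (2 * x₁ - s) ^ (α - 1)) / (x₁ - s))
        (Set.Icc (x₁ - ε) x₁) volume ∧
      (∫ s in (x₁ - ε)..x₁,
          |(s ^ (α - 1) - (2 * x₁ - s) ^ (α - 1)) / (x₁ - s)|) ≤
        C * (x₁ ^ (α - 1) - (x₁ - ε) ^ (α - 1)) / (α - 1) := by
  obtain ⟨hα0, hα1⟩ := hα
  refine ⟨2 * (1 - α), by linarith, fun x₁ ε hx₁ hε hεx => ?_⟩
  set a := x₁ - ε with ha
  have ha0 : 0 < a := by simp only [ha]; linarith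
  have hax : a < x₁ := by simp only [ha]; linarith
  -- pointwise bound
  have key : ∀ s ∈ Icc a x₁,
      |(s ^ (α - 1) - (2 * x₁ - s) ^ (α - 1)) / (x₁ - s)| ≤ 2 * (1 - α) * s ^ (α - 2) := by
    intro s hs
    obtain ⟨hs1, hs2⟩ := hs
    have hs0 : 0 < s := lt_of_lt_of_le ha0 hs1
    have hsrpow : (0:ℝ) < s ^ (α - 2) := Real.rpow_pos_of_pos hs0 _
    rcases eq_or_lt_of_le hs2 with heq | hlt
    · subst heq
      have : (2 * s - s : ℝ) = s := by ring
      rw [this, sub_self, sub_self, zero_div, abs_zero]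
      nlinarith
    · -- MVT on [s, 2x₁ - s]
      have hb : s < 2 * x₁ - s := by linarith
      have hderiv : ∀ t ∈ Set.Ioo s (2 * x₁ - s),
          HasDerivAt (fun t : ℝ => t ^ (α - 1)) ((α - 1) * t ^ (α - 2)) t := by
        intro t ht
        have ht0 : t ≠ 0 := by nlinarith [ht.1]
        have := Real.hasDerivAt_rpow_const (x := t) (p := α - 1) (Or.inl ht0)
        convert this using 2
        ring
      have hcont : ContinuousOn (fun t : ℝ => t ^ (α - 1)) (Set.Icc s (2 * x₁ - s)) := by
        intro t ht
        have ht0 : t ≠ 0 := by nlinarith [ht.1]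
        exact ((Real.hasDerivAt_rpow_const (x := t) (p := α - 1)
          (Or.inl ht0)).continuousAt).continuousWithinAt
      obtain ⟨c, hc, hcslope⟩ := exists_hasDerivAt_eq_slope (fun t : ℝ => t ^ (α - 1))
        (fun t => (α - 1) * t ^ (α - 2)) hb hcont hderiv
      have hc0 : 0 < c := lt_trans hs0 hc.1
      have hbs : (2 * x₁ - s) - s = 2 * (x₁ - s) := by ring
      have hxs : (0:ℝ) < x₁ - s := by linarith
      have hnum : s ^ (α - 1) - (2 * x₁ - s) ^ (α - 1)
          = (1 - α) * c ^ (α - 2) * (2 * (x₁ - s)) := by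
        have hne : (2 * x₁ - s) - s ≠ 0 := by linarith
        field_simp at hcslope
        nlinarith [hcslope]
      rw [hnum]
      have hval : (1 - α) * c ^ (α - 2) * (2 * (x₁ - s)) / (x₁ - s)
          = 2 * (1 - α) * c ^ (α - 2) := by
        field_simp
      rw [hval]
      have hcpos : (0:ℝ) < c ^ (α - 2) := Real.rpow_pos_of_pos hc0 _
      rw [abs_of_nonneg (by nlinarith)]
      have hcs : c ^ (α - 2) ≤ s ^ (α - 2) :=
        Real.rpow_le_rpow_of_nonpos hs0 hc.1.le (by linarith)
      nlinarith
  -- bound function is integrable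
  have hgcont : ContinuousOn (fun s : ℝ => 2 * (1 - α) * s ^ (α - 2)) (Icc a x₁) := by
    apply ContinuousOn.mul continuousOn_const
    intro t ht
    exact ((Real.hasDerivAt_rpow_const (x := t) (p := α - 2)
      (Or.inl (by nlinarith [ht.1] : t ≠ 0))).continuousAt).continuousWithinAt
  have hgint : IntegrableOn (fun s : ℝ => 2 * (1 - α) * s ^ (α - 2)) (Icc a x₁) volume :=
    hgcont.integrableOn_Icc
  -- f is a.e. strongly measurable
  have hfm : AEStronglyMeasurable
      (fun s : ℝ => (s ^ (α - 1) - (2 * x₁ - s) ^ (α - 1)) / (x₁ - s))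
      (volume.restrict (Icc a x₁)) := by
    have hg : Measurable (fun s : ℝ =>
        (Real.exp (Real.log s * (α - 1)) - Real.exp (Real.log (2 * x₁ - s) * (α - 1)))
          / (x₁ - s)) := by
      apply Measurable.div _ (measurable_const.sub measurable_id)
      exact (Real.measurable_exp.comp (Real.measurable_log.mul_const _)).sub
        (Real.measurable_exp.comp ((Real.measurable_log.comp
          (measurable_const.sub measurable_id)).mul_const _))
    apply hg.aestronglyMeasurable.congr
    filter_upwards [ae_restrict_mem measurableSet_Icc] with s hs
    have hs0 : 0 < s := lt_of_lt_of_le ha0 hs.1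
    have hs2 : 0 < 2 * x₁ - s := by cases hs with | intro h1 h2 => linarith
    rw [Real.rpow_def_of_pos hs0, Real.rpow_def_of_pos hs2]
  have hfint : IntegrableOn
      (fun s : ℝ => (s ^ (α - 1) - (2 * x₁ - s) ^ (α - 1)) / (x₁ - s)) (Icc a x₁) volume := by
    apply Integrable.mono' hgint hfm
    filter_upwards [ae_restrict_mem measurableSet_Icc] with s hs
    rw [Real.norm_eq_abs]
    exact key s hs
  refine ⟨hfint, ?_⟩
  -- integral bound
  have hIg : IntervalIntegrable (fun s : ℝ => 2 * (1 - α) * s ^ (α - 2)) volume a x₁ := by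
    rw [intervalIntegrable_iff_integrableOn_Icc_of_le hax.le]; exact hgint
  have hIf : IntervalIntegrable
      (fun s : ℝ => |(s ^ (α - 1) - (2 * x₁ - s) ^ (α - 1)) / (x₁ - s)|) volume a x₁ := by
    rw [intervalIntegrable_iff_integrableOn_Icc_of_le hax.le]; exact hfint.abs
  have hmono := intervalIntegral.integral_mono_on hax.le hIf hIg key
  have hcomp : (∫ s in a..x₁, 2 * (1 - α) * s ^ (α - 2))
      = 2 * (1 - α) * (x₁ ^ (α - 1) - a ^ (α - 1)) / (α - 1) := by
    rw [intervalIntegral.integral_const_mul]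
    rw [integral_rpow (Or.inr ⟨by linarith, by
      rw [Set.uIcc_of_le hax.le]
      intro h0
      exact absurd h0.1 (not_le.mpr ha0)⟩)]
    have : α - 2 + 1 = α - 1 := by ring
    rw [this]
    ring
  calc (∫ s in a..x₁, |(s ^ (α - 1) - (2 * x₁ - s) ^ (α - 1)) / (x₁ - s)|)
      ≤ ∫ s in a..x₁, 2 * (1 - α) * s ^ (α - 2) := hmono
    _ = 2 * (1 - α) * (x₁ ^ (α - 1) - a ^ (α - 1)) / (α - 1) := hcomp
end

section
/- For x₁ > 0 and α ∈ (0,1), lim_{ε→0⁺} lim_{x₂→0} ∫_{x₁−ε}^{x₁+ε} (x₁ − s) s^(α−1)/((x₁ − s)² + x₂²) ds = 0, where the inner limit exists and equals ∫_{x₁−ε}^{x₁} (s^(α−1) − (2x₁−s)^(α−1))/(x₁ − s) ds. -/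
open MeasureTheory Filter Real Set

private lemma aux_lip (x₁ α : ℝ) (hx₁ : 0 < x₁) (hα : α ∈ Set.Ioo (0:ℝ) 1)
    {s : ℝ} (h1 : x₁/2 ≤ s) (h2 : s ≤ x₁) :
    |s ^ (α-1) - (2*x₁ - s) ^ (α-1)| ≤ (2 * ((1-α) * (x₁/2) ^ (α-2))) * (x₁ - s) := by
  have hx2 : (0:ℝ) < x₁/2 := by linarith
  have hMnn : 0 ≤ (1-α) * (x₁/2) ^ (α-2) :=
    mul_nonneg (by linarith [hα.2]) (Real.rpow_nonneg hx2.le _)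
  have key : ∀ a ∈ Icc (x₁/2) (2*x₁), ∀ b ∈ Icc (x₁/2) (2*x₁),
      ‖b ^ (α-1) - a ^ (α-1)‖ ≤ ((1-α) * (x₁/2) ^ (α-2)) * ‖b - a‖ := by
    intro a ha b hb
    refine (convex_Icc (x₁/2) (2*x₁)).norm_image_sub_le_of_norm_hasDerivWithin_le
      (f := fun t => t ^ (α-1)) (f' := fun t => (α-1) * t ^ (α-2))
      (fun t ht => ?_) (fun t ht => ?_) ha hb
    · have ht0 : t ≠ 0 := by intro h; rw [h] at ht; linarith [ht.1]
      have := (Real.hasDerivAt_rpow_const (x := t) (p := α - 1) (Or.inl ht0)).hasDerivWithinAt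
        (s := Icc (x₁/2) (2*x₁))
      rw [show α - 1 - 1 = α - 2 from by ring] at this
      exact this
    · have ht0 : 0 < t := lt_of_lt_of_le hx2 ht.1
      rw [Real.norm_eq_abs, abs_mul, abs_of_nonpos (by linarith [hα.2] : α - 1 ≤ 0),
        abs_of_nonneg (Real.rpow_nonneg ht0.le _)]
      have h5 := Real.rpow_le_rpow_of_nonpos hx2 ht.1 (by linarith [hα.2] : α - 2 ≤ 0)
      have h4 := mul_le_mul_of_nonneg_left h5 (by linarith [hα.2] : (0:ℝ) ≤ 1 - α)
      linarith
  have hs : s ∈ Icc (x₁/2) (2*x₁) := ⟨h1, by linarith⟩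
  have hs' : 2*x₁ - s ∈ Icc (x₁/2) (2*x₁) := ⟨by linarith, by linarith⟩
  have := key (2*x₁ - s) hs' s hs
  rw [Real.norm_eq_abs, Real.norm_eq_abs] at this
  have habs : |s - (2*x₁ - s)| = 2 * (x₁ - s) := by
    rw [abs_of_nonpos (by linarith)]; ring
  rw [habs] at this
  linarith

private lemma aux_gbound (x₁ α : ℝ) (hx₁ : 0 < x₁) (hα : α ∈ Set.Ioo (0:ℝ) 1)
    {s : ℝ} (h1 : x₁/2 ≤ s) (h2 : s ≤ x₁) :
    |(s ^ (α-1) - (2*x₁ - s) ^ (α-1)) / (x₁ - s)| ≤ 2 * ((1-α) * (x₁/2) ^ (α-2)) := by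
  have hx2 : (0:ℝ) < x₁/2 := by linarith
  have hCnn : 0 ≤ 2 * ((1-α) * (x₁/2) ^ (α-2)) := by
    have := Real.rpow_nonneg hx2.le (α-2); nlinarith [hα.2]
  rcases eq_or_lt_of_le h2 with h | h
  · rw [h, show 2*x₁ - x₁ = x₁ by ring, sub_self, sub_self, zero_div, abs_zero]
    exact hCnn
  · rw [abs_div, abs_of_pos (by linarith : (0:ℝ) < x₁ - s), div_le_iff₀ (by linarith)]
    exact aux_lip x₁ α hx₁ hα h1 h2


/-- For `x₁ > 0`, `α ∈ (0,1)` and `ε ∈ (0, x₁/2)`, the limit as `x₂ → 0` of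
`∫_{x₁−ε}^{x₁+ε} (x₁−s)s^(α−1)/((x₁−s)²+x₂²) ds` exists and equals
`∫_{x₁−ε}^{x₁} (s^(α−1) − (2x₁−s)^(α−1))/(x₁−s) ds`, and the latter tends to `0`
as `ε → 0⁺`. -/
theorem iterated_limit_zero (x₁ α : ℝ) (hx₁ : 0 < x₁) (hα : α ∈ Set.Ioo (0:ℝ) 1) :
    (∀ ε : ℝ, 0 < ε → ε < x₁ / 2 →
      Tendsto
        (fun x₂ : ℝ =>
          ∫ s in (x₁ - ε)..(x₁ + ε), (x₁ - s) * s ^ (α - 1) / ((x₁ - s) ^ 2 + x₂ ^ 2))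
        (nhdsWithin 0 {(0:ℝ)}ᶜ)
        (nhds (∫ s in (x₁ - ε)..x₁,
          (s ^ (α - 1) - (2 * x₁ - s) ^ (α - 1)) / (x₁ - s)))) ∧
    Tendsto
      (fun ε : ℝ =>
        ∫ s in (x₁ - ε)..x₁, (s ^ (α - 1) - (2 * x₁ - s) ^ (α - 1)) / (x₁ - s))
      (nhdsWithin 0 (Set.Ioi 0)) (nhds 0) := by
  obtain ⟨hα0, hα1⟩ := hα
  have hx2 : (0:ℝ) < x₁/2 := by linarith
  set C : ℝ := 2 * ((1-α) * (x₁/2) ^ (α-2)) with hCdef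
  have hCnn : 0 ≤ C := by
    have := Real.rpow_nonneg hx2.le (α-2); rw [hCdef]; nlinarith
  constructor
  · intro ε hε0 hεx
    have hIoc : Set.uIoc (x₁ - ε) x₁ = Ioc (x₁ - ε) x₁ := uIoc_of_le (by linarith)
    -- Dominated convergence for the integrals of F x₂ over (x₁-ε)..x₁
    have hDCT : Tendsto
        (fun x₂ : ℝ => ∫ s in (x₁-ε)..x₁,
          (x₁ - s) * (s ^ (α-1) - (2*x₁ - s) ^ (α-1)) / ((x₁-s)^2 + x₂^2))
        (nhdsWithin 0 {(0:ℝ)}ᶜ)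
        (nhds (∫ s in (x₁-ε)..x₁, (s ^ (α-1) - (2*x₁ - s) ^ (α-1)) / (x₁ - s))) := by
      apply intervalIntegral.tendsto_integral_filter_of_dominated_convergence
        (bound := fun _ => C)
      · refine Filter.Eventually.of_forall fun x₂ => Measurable.aestronglyMeasurable ?_
        fun_prop
      · refine Filter.Eventually.of_forall fun x₂ => Filter.Eventually.of_forall fun u => ?_
        intro hu
        rw [hIoc] at hu
        rcases eq_or_lt_of_le hu.2 with h | h
        · rw [h, sub_self]
          simp [hCnn]
        · have hd : 0 < x₁ - u := by linarith
          have hD : 0 < (x₁-u)^2 + x₂^2 := by positivity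
          have hΔ : |u ^ (α-1) - (2*x₁ - u) ^ (α-1)| ≤ C * (x₁ - u) :=
            aux_lip x₁ α hx₁ ⟨hα0, hα1⟩ (by linarith [hu.1]) hu.2
          rw [Real.norm_eq_abs, abs_div, abs_of_pos hD, abs_mul, abs_of_pos hd,
            div_le_iff₀ hD]
          nlinarith [mul_le_mul_of_nonneg_left hΔ hd.le,
            mul_nonneg hCnn (sq_nonneg x₂), abs_nonneg (u ^ (α-1) - (2*x₁ - u) ^ (α-1))]
      · exact intervalIntegrable_const
      · have hne : ∀ᵐ u : ℝ, u ≠ x₁ := by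
          simp only [ae_iff, not_not, Set.setOf_eq_eq_singleton]
          exact measure_singleton x₁
        refine hne.mono fun u hu hmem => ?_
        rw [hIoc] at hmem
        have hult : u < x₁ := lt_of_le_of_ne hmem.2 hu
        have hd : 0 < x₁ - u := by linarith
        have hD0 : ((x₁-u)^2 + (0:ℝ)^2) ≠ 0 := by
          have := pow_pos hd 2; intro h; norm_num at h; nlinarith
        have hcont : Tendsto
            (fun x₂ : ℝ => (x₁-u)*(u^(α-1)-(2*x₁-u)^(α-1))/((x₁-u)^2 + x₂^2))
            (nhds 0)
            (nhds ((x₁-u)*(u^(α-1)-(2*x₁-u)^(α-1))/((x₁-u)^2 + (0:ℝ)^2))) := by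
          refine Tendsto.div tendsto_const_nhds ?_ hD0
          exact tendsto_const_nhds.add ((continuous_pow 2).tendsto 0)
        have hval : (x₁-u)*(u^(α-1)-(2*x₁-u)^(α-1))/((x₁-u)^2 + (0:ℝ)^2)
            = (u ^ (α-1) - (2*x₁ - u) ^ (α-1)) / (x₁ - u) := by
          rw [show ((0:ℝ))^2 = 0 by norm_num, add_zero, sq]
          exact mul_div_mul_left _ _ hd.ne'
        rw [hval] at hcont
        exact hcont.mono_left nhdsWithin_le_nhds
    -- Equality of the two integrals for x₂ ≠ 0
    have hEq : ∀ x₂ : ℝ, x₂ ≠ 0 →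
        (∫ s in (x₁-ε)..(x₁+ε), (x₁ - s) * s ^ (α - 1) / ((x₁ - s) ^ 2 + x₂ ^ 2))
        = ∫ s in (x₁-ε)..x₁,
            (x₁ - s) * (s ^ (α-1) - (2*x₁ - s) ^ (α-1)) / ((x₁-s)^2 + x₂^2) := by
      intro x₂ hx₂
      set h : ℝ → ℝ := fun s => (x₁ - s) * s ^ (α - 1) / ((x₁ - s) ^ 2 + x₂ ^ 2) with hh
      have hD : ∀ s : ℝ, (x₁ - s)^2 + x₂^2 ≠ 0 := fun s =>
        ne_of_gt (add_pos_of_nonneg_of_pos (sq_nonneg _)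
          (lt_of_le_of_ne (sq_nonneg x₂) (Ne.symm (pow_ne_zero 2 hx₂))))
      have hch : ContinuousOn h (Ici (x₁/2)) := by
        intro s hs
        have hs0 : s ≠ 0 := ne_of_gt (lt_of_lt_of_le hx2 hs)
        apply ContinuousAt.continuousWithinAt
        apply ContinuousAt.div
        · exact (continuousAt_const.sub continuousAt_id).mul
            (Real.continuousAt_rpow_const s _ (Or.inl hs0))
        · exact ((by fun_prop : Continuous fun s : ℝ => (x₁-s)^2 + x₂^2)).continuousAt
        · exact hD s
      have hsub1 : uIcc (x₁-ε) x₁ ⊆ Ici (x₁/2) := by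
        rw [uIcc_of_le (by linarith : x₁-ε ≤ x₁)]
        intro u hu; exact le_trans (by linarith) hu.1
      have hsub2 : uIcc x₁ (x₁+ε) ⊆ Ici (x₁/2) := by
        rw [uIcc_of_le (by linarith : x₁ ≤ x₁+ε)]
        intro u hu; exact le_trans (by linarith) hu.1
      have hi1 : IntervalIntegrable h volume (x₁-ε) x₁ :=
        (hch.mono hsub1).intervalIntegrable
      have hi2 : IntervalIntegrable h volume x₁ (x₁+ε) :=
        (hch.mono hsub2).intervalIntegrable
      have hi3 : IntervalIntegrable (fun s => h (2*x₁ - s)) volume (x₁-ε) x₁ := by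
        refine (ContinuousOn.intervalIntegrable ?_)
        refine hch.comp ((continuous_const.sub continuous_id).continuousOn) ?_
        intro u hu
        rw [uIcc_of_le (by linarith : x₁-ε ≤ x₁)] at hu
        simp only [mem_Ici]
        have := hu.2
        linarith
      have hsubst : (∫ s in x₁..(x₁+ε), h s) = ∫ s in (x₁-ε)..x₁, h (2*x₁ - s) := by
        have h0 := intervalIntegral.integral_comp_sub_left (a := x₁-ε) (b := x₁) h (2*x₁)
        rw [show 2*x₁ - x₁ = x₁ by ring, show 2*x₁ - (x₁-ε) = x₁ + ε by ring] at h0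
        exact h0.symm
      calc (∫ s in (x₁-ε)..(x₁+ε), h s)
          = (∫ s in (x₁-ε)..x₁, h s) + ∫ s in x₁..(x₁+ε), h s :=
            (intervalIntegral.integral_add_adjacent_intervals hi1 hi2).symm
        _ = ∫ s in (x₁-ε)..x₁, (h s + h (2*x₁ - s)) := by
            rw [hsubst, intervalIntegral.integral_add hi1 hi3]
        _ = ∫ s in (x₁-ε)..x₁,
              (x₁ - s) * (s ^ (α-1) - (2*x₁ - s) ^ (α-1)) / ((x₁-s)^2 + x₂^2) := by
            apply intervalIntegral.integral_congr
            intro s hs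
            simp only [hh]
            rw [show x₁ - (2*x₁ - s) = -(x₁ - s) by ring, neg_sq]
            ring
    refine Tendsto.congr' ?_ hDCT
    exact Filter.eventuallyEq_of_mem self_mem_nhdsWithin fun x₂ hx₂ => (hEq x₂ hx₂).symm
  · apply squeeze_zero_norm'
      (a := fun ε : ℝ => C * ε)
    · filter_upwards [Ioo_mem_nhdsGT_of_mem (⟨le_refl 0, hx2⟩ : (0:ℝ) ∈ Ico 0 (x₁/2))]
        with ε hε
      have hb : ‖∫ s in (x₁-ε)..x₁, (s ^ (α-1) - (2*x₁ - s) ^ (α-1)) / (x₁ - s)‖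
          ≤ C * |x₁ - (x₁ - ε)| := by
        apply intervalIntegral.norm_integral_le_of_norm_le_const
        intro u hu
        rw [uIoc_of_le (by linarith [hε.1] : x₁-ε ≤ x₁)] at hu
        rw [Real.norm_eq_abs]
        exact aux_gbound x₁ α hx₁ ⟨hα0, hα1⟩ (by linarith [hu.1, hε.2]) hu.2
      rw [show x₁ - (x₁ - ε) = ε by ring, abs_of_pos hε.1] at hb
      exact hb
    · have : Tendsto (fun ε : ℝ => C * ε) (nhds 0) (nhds (C * 0)) :=
        (continuous_const.mul continuous_id).tendsto 0
      rw [mul_zero] at this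
      exact this.mono_left nhdsWithin_le_nhds
end

section
/- Let μ ∈ (2/3, 1) and t > 0, and suppose a function v : ℝ² → ℝ² satisfies the spherical-average identity ∫₀^{2π} |v(r e^{iθ})|² dθ = (1/(2π)) (Σ_{n≥0} r^(−2n−2) |m_{r,n}|² + Σ_{n≥1} r^(2n−2) |M_{r,n}|²), where m_{r,n} and M_{r,n} are the inner and outer moments of the Kaden measure ω_t. Then r ∫₀^{2π} |v(r e^{iθ})|² dθ ≤ C r^(3 − 2/μ) for some constant C and all r ∈ (0,1], and in particular ∫_{∂B(0,r)} |v|² dS → 0 as r → 0⁺. -/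
set_option maxHeartbeats 2000000

open MeasureTheory Filter Real Set Complex Topology

/-- For `μ ∈ (2/3,1)` and `t > 0`: if `v` satisfies the moment expansion of the
spherical averages for the Kaden measure `ω_t`, then
`r ∫₀^{2π} |v(re^{iθ})|² dθ ≤ C r^(3−2/μ)` for `r ∈ (0,1]`, and in particular
the spherical integrals `∫_{∂B(0,r)} |v|² dS` tend to `0` as `r → 0⁺`. -/
theorem kaden_spherical_average_decay (μ t : ℝ) (hμ : μ ∈ Set.Ioo (2/3 : ℝ) 1)
    (ht : 0 < t) (v : ℂ → ℂ) (m M : ℝ → ℕ → ℂ)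
    (hm0 : ∀ r : ℝ, 0 < r → m r 0 = ((r ^ (2 - 1/μ) : ℝ) : ℂ))
    (hm : ∀ r : ℝ, 0 < r → ∀ n : ℕ, 1 ≤ n → m r n =
      (((2 - 1/μ : ℝ)) : ℂ) *
        ∫ s in (0:ℝ)..r,
          ((s ^ ((n : ℝ) + 1 - 1/μ) : ℝ) : ℂ) *
            Complex.exp (Complex.I * t * n * ((s ^ (-(1/μ)) : ℝ) : ℂ) / (2 * Real.pi)))
    (hM : ∀ r : ℝ, 0 < r → ∀ n : ℕ, 1 ≤ n → M r n =
      (((2 - 1/μ : ℝ)) : ℂ) *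
        ∫ s in Set.Ioi r,
          ((s ^ (-(n : ℝ) + 1 - 1/μ) : ℝ) : ℂ) *
            Complex.exp (-(Complex.I * t * n * ((s ^ (-(1/μ)) : ℝ) : ℂ)) / (2 * Real.pi)))
    (hv : ∀ r : ℝ, 0 < r →
      (∫ θ in (0:ℝ)..(2 * Real.pi), ‖v (r * Complex.exp (θ * Complex.I))‖ ^ 2) =
        (1 / (2 * Real.pi)) *
          ((∑' n : ℕ, r ^ (-2 * (n : ℝ) - 2) * ‖m r n‖ ^ 2) +
           (∑' n : ℕ, r ^ (2 * ((n : ℝ) + 1) - 2) * ‖M r (n + 1)‖ ^ 2))) :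
    (∃ C : ℝ, ∀ r : ℝ, r ∈ Set.Ioc (0:ℝ) 1 →
      r * (∫ θ in (0:ℝ)..(2 * Real.pi), ‖v (r * Complex.exp (θ * Complex.I))‖ ^ 2) ≤
        C * r ^ (3 - 2/μ)) ∧
    Tendsto
      (fun r : ℝ =>
        r * ∫ θ in (0:ℝ)..(2 * Real.pi), ‖v (r * Complex.exp (θ * Complex.I))‖ ^ 2)
      (𝓝[>] 0) (𝓝 0) := by
  obtain ⟨hμ1, hμ2⟩ := hμ
  have hμ0 : 0 < μ := by linarith
  set p : ℝ := 1/μ with hpdef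
  have hp1 : 1 < p := by rw [hpdef, lt_div_iff₀ hμ0]; linarith
  have hp2 : p < 3/2 := by rw [hpdef, div_lt_iff₀ hμ0]; linarith
  have hπ : (0:ℝ) < Real.pi := Real.pi_pos
  -- bound on the inner moments
  have hmabs : ∀ r : ℝ, 0 < r → ∀ n : ℕ, 1 ≤ n →
      ‖m r n‖ ≤ (2-p) * r ^ ((n:ℝ)+2-p) / ((n:ℝ)+2-p) := by
    intro r hr n hn
    have hn' : (1:ℝ) ≤ (n:ℝ) := Nat.one_le_cast.mpr hn
    rw [hm r hr n hn, norm_mul, Complex.norm_real, Real.norm_eq_abs,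
      abs_of_pos (by linarith : (0:ℝ) < 2-p), mul_div_assoc]
    refine mul_le_mul_of_nonneg_left ?_ (by linarith)
    refine (intervalIntegral.norm_integral_le_integral_norm hr.le).trans_eq ?_
    have heq : EqOn
        (fun s : ℝ => ‖((s ^ ((n:ℝ)+1-p) : ℝ) : ℂ) *
          Complex.exp (Complex.I * t * n * ((s ^ (-p) : ℝ) : ℂ) / (2 * Real.pi))‖)
        (fun s : ℝ => s ^ ((n:ℝ)+1-p)) (uIcc (0:ℝ) r) := by
      intro s hs
      rw [uIcc_of_le hr.le] at hs
      simp only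
      rw [show Complex.I * (t:ℂ) * (n:ℂ) * ((s ^ (-p) : ℝ) : ℂ) / (2 * (Real.pi:ℂ)) =
          (((t * n * s ^ (-p) / (2 * Real.pi)) : ℝ) : ℂ) * Complex.I from by push_cast; ring,
        norm_mul,
        Complex.norm_exp_ofReal_mul_I, mul_one, Complex.norm_real, Real.norm_eq_abs,
        _root_.abs_of_nonneg (Real.rpow_nonneg hs.1 _)]
    rw [intervalIntegral.integral_congr heq,
      integral_rpow (Or.inl (by linarith : (-1:ℝ) < (n:ℝ)+1-p)),
      Real.zero_rpow (by linarith : (0:ℝ) < (n:ℝ)+1-p+1).ne', sub_zero,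
      show (n:ℝ)+1-p+1 = (n:ℝ)+2-p from by ring]
  -- bound on the outer moments
  have hMabs : ∀ r : ℝ, 0 < r → ∀ n : ℕ, 1 ≤ n →
      ‖M r n‖ ≤ (2-p) * r ^ (-(n:ℝ)+2-p) / ((n:ℝ)-2+p) := by
    intro r hr n hn
    have hn' : (1:ℝ) ≤ (n:ℝ) := Nat.one_le_cast.mpr hn
    have hc : (0:ℝ) < (n:ℝ)-2+p := by linarith
    rw [hM r hr n hn, norm_mul, Complex.norm_real, Real.norm_eq_abs,
      abs_of_pos (by linarith : (0:ℝ) < 2-p), mul_div_assoc]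
    refine mul_le_mul_of_nonneg_left ?_ (by linarith)
    refine (MeasureTheory.norm_integral_le_integral_norm _).trans_eq ?_
    have heq : EqOn
        (fun s : ℝ => ‖((s ^ (-(n:ℝ)+1-p) : ℝ) : ℂ) *
          Complex.exp (-(Complex.I * t * n * ((s ^ (-p) : ℝ) : ℂ)) / (2 * Real.pi))‖)
        (fun s : ℝ => s ^ (-(n:ℝ)+1-p)) (Set.Ioi r) := by
      intro s hs
      have hs0 : (0:ℝ) < s := hr.trans hs
      simp only
      rw [show -(Complex.I * (t:ℂ) * (n:ℂ) * ((s ^ (-p) : ℝ) : ℂ)) / (2 * (Real.pi:ℂ)) =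
          (((-(t * n * s ^ (-p)) / (2 * Real.pi)) : ℝ) : ℂ) * Complex.I from by push_cast; ring,
        norm_mul,
        Complex.norm_exp_ofReal_mul_I, mul_one, Complex.norm_real, Real.norm_eq_abs,
        _root_.abs_of_nonneg (Real.rpow_nonneg hs0.le _)]
    rw [MeasureTheory.setIntegral_congr_fun measurableSet_Ioi heq,
      integral_Ioi_rpow_of_lt (by linarith : -(n:ℝ)+1-p < -1) hr,
      show -(n:ℝ)+1-p+1 = -(n:ℝ)+2-p from by ring,
      div_eq_div_iff (by linarith : (-(n:ℝ)+2-p) < 0).ne hc.ne']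
    ring
  -- summable majorant
  have hT : Summable (fun n : ℕ => 1/((n:ℝ)+1)^2) := by
    have h1 : Summable (fun n : ℕ => 1/(n:ℝ)^2) := summable_one_div_nat_pow.mpr one_lt_two
    have h2 := (summable_nat_add_iff 1).mpr h1
    exact h2.congr fun n => by push_cast; ring
  obtain ⟨T, hTdef⟩ : ∃ x : ℝ, x = ∑' n : ℕ, 1/((n:ℝ)+1)^2 := ⟨_, rfl⟩
  have hT0 : 0 ≤ T := hTdef ▸ tsum_nonneg fun n => by positivity
  obtain ⟨K1, hK1def⟩ : ∃ x : ℝ, x = 4*(2-p)^2 := ⟨_, rfl⟩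
  obtain ⟨K2, hK2def⟩ : ∃ x : ℝ, x = (2-p)^2/(p-1)^2 := ⟨_, rfl⟩
  have hK10 : 0 ≤ K1 := by rw [hK1def]; positivity
  have hK20 : 0 ≤ K2 := by rw [hK2def]; positivity
  obtain ⟨C, hCdef⟩ : ∃ x : ℝ, x = (1/(2*Real.pi)) * (K1 + K2) * T := ⟨_, rfl⟩
  have hC0 : 0 ≤ C := by rw [hCdef]; positivity
  -- pointwise term bounds
  have hrpow_add : ∀ r : ℝ, 0 < r → ∀ x y : ℝ, r ^ x * r ^ y = r ^ (x+y) :=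
    fun r hr x y => (Real.rpow_add hr x y).symm
  have hrsq : ∀ r : ℝ, 0 < r → ∀ x : ℝ, (r ^ x) ^ 2 = r ^ (x*2) := by
    intro r hr x
    rw [← Real.rpow_natCast (r ^ x) 2, ← Real.rpow_mul hr.le]
    norm_num
  have hB1 : ∀ r : ℝ, 0 < r → ∀ n : ℕ,
      r ^ (-2*(n:ℝ)-2) * ‖m r n‖ ^ 2 ≤ K1 * r ^ (2-2*p) * (1/((n:ℝ)+1)^2) := by
    intro r hr n
    rcases Nat.eq_zero_or_pos n with h0 | h1
    · subst h0
      rw [hm0 r hr, Complex.norm_real, Real.norm_eq_abs, _root_.abs_of_nonneg (Real.rpow_nonneg hr.le _)]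
      have : r ^ (-2*((0:ℕ):ℝ)-2) * (r ^ (2-p)) ^ 2 = r ^ (2-2*p) := by
        rw [hrsq r hr, hrpow_add r hr]
        norm_num
        ring_nf
      rw [this]
      have h14 : (1:ℝ) ≤ K1 := by rw [hK1def]; nlinarith
      have hrq : (0:ℝ) ≤ r ^ (2-2*p) := Real.rpow_nonneg hr.le _
      simp only [Nat.cast_zero]
      nlinarith
    · have hn' : (1:ℝ) ≤ (n:ℝ) := Nat.one_le_cast.mpr h1
      have hc : (0:ℝ) < (n:ℝ)+2-p := by linarith
      calc r ^ (-2*(n:ℝ)-2) * ‖m r n‖ ^ 2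
          ≤ r ^ (-2*(n:ℝ)-2) * ((2-p) * r ^ ((n:ℝ)+2-p) / ((n:ℝ)+2-p)) ^ 2 := by
            refine mul_le_mul_of_nonneg_left ?_ (Real.rpow_nonneg hr.le _)
            exact pow_le_pow_left₀ (norm_nonneg _) (hmabs r hr n h1) 2
        _ = (2-p)^2/((n:ℝ)+2-p)^2 * (r ^ (-2*(n:ℝ)-2) * r ^ (((n:ℝ)+2-p)*2)) := by
            rw [div_pow, mul_pow, hrsq r hr]; ring
        _ = (2-p)^2/((n:ℝ)+2-p)^2 * r ^ (2-2*p) := by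
            rw [hrpow_add r hr, show -2*(n:ℝ)-2+((n:ℝ)+2-p)*2 = 2-2*p from by ring]
        _ ≤ K1 * r ^ (2-2*p) * (1/((n:ℝ)+1)^2) := by
            rw [show K1 * r ^ (2-2*p) * (1/((n:ℝ)+1)^2)
                = K1/((n:ℝ)+1)^2 * r ^ (2-2*p) from by ring]
            refine mul_le_mul_of_nonneg_right ?_ (Real.rpow_nonneg hr.le _)
            rw [div_le_div_iff₀ (pow_pos hc 2) (by positivity), hK1def]
            have hle : ((n:ℝ)+1)^2 ≤ 4*((n:ℝ)+2-p)^2 := by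
              nlinarith [mul_pos (show (0:ℝ) < (n:ℝ)+3-2*p by linarith)
                (show (0:ℝ) < 3*(n:ℝ)+5-2*p by linarith)]
            nlinarith [mul_le_mul_of_nonneg_left hle (sq_nonneg (2-p))]
  have hB2 : ∀ r : ℝ, 0 < r → ∀ n : ℕ,
      r ^ (2*((n:ℝ)+1)-2) * ‖M r (n+1)‖ ^ 2 ≤ K2 * r ^ (2-2*p) * (1/((n:ℝ)+1)^2) := by
    intro r hr n
    have hM1 := hMabs r hr (n+1) (Nat.le_add_left 1 n)
    rw [Nat.cast_add, Nat.cast_one] at hM1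
    have hc : (0:ℝ) < (n:ℝ)+1-2+p := by linarith [Nat.cast_nonneg (α := ℝ) n]
    have hn0 : (0:ℝ) ≤ (n:ℝ) := Nat.cast_nonneg n
    calc r ^ (2*((n:ℝ)+1)-2) * ‖M r (n+1)‖ ^ 2
        ≤ r ^ (2*((n:ℝ)+1)-2) * ((2-p) * r ^ (-((n:ℝ)+1)+2-p) / ((n:ℝ)+1-2+p)) ^ 2 := by
          refine mul_le_mul_of_nonneg_left ?_ (Real.rpow_nonneg hr.le _)
          exact pow_le_pow_left₀ (norm_nonneg _) hM1 2
      _ = (2-p)^2/((n:ℝ)+1-2+p)^2 * (r ^ (2*((n:ℝ)+1)-2) * r ^ ((-((n:ℝ)+1)+2-p)*2)) := by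
          rw [div_pow, mul_pow, hrsq r hr]; ring
      _ = (2-p)^2/((n:ℝ)+1-2+p)^2 * r ^ (2-2*p) := by
          rw [hrpow_add r hr, show 2*((n:ℝ)+1)-2+((-((n:ℝ)+1)+2-p)*2) = 2-2*p from by ring]
      _ ≤ K2 * r ^ (2-2*p) * (1/((n:ℝ)+1)^2) := by
          rw [show K2 * r ^ (2-2*p) * (1/((n:ℝ)+1)^2)
              = (2-p)^2/(p-1)^2/((n:ℝ)+1)^2 * r ^ (2-2*p) from by rw [hK2def]; ring]
          refine mul_le_mul_of_nonneg_right ?_ (Real.rpow_nonneg hr.le _)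
          rw [div_div, div_le_div_iff₀ (pow_pos hc 2)
            (mul_pos (pow_pos (by linarith : (0:ℝ) < p-1) 2) (by positivity))]
          have key : (p-1)*((n:ℝ)+1) ≤ (n:ℝ)+1-2+p := by nlinarith
          have key2 : ((p-1)*((n:ℝ)+1))^2 ≤ ((n:ℝ)+1-2+p)^2 := by
            refine pow_le_pow_left₀ (mul_nonneg (by linarith) (by positivity)) key 2
          nlinarith [mul_le_mul_of_nonneg_left key2 (sq_nonneg (2-p))]
  -- the main bound
  have hbound : ∀ r : ℝ, r ∈ Set.Ioc (0:ℝ) 1 →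
      r * (∫ θ in (0:ℝ)..(2 * Real.pi), ‖v (r * Complex.exp (θ * Complex.I))‖ ^ 2) ≤
        C * r ^ (3 - 2/μ) := by
    intro r hrm
    obtain ⟨hr, hr1⟩ := hrm
    rw [hv r hr]
    have hmaj : Summable (fun n : ℕ => K1 * r ^ (2-2*p) * (1/((n:ℝ)+1)^2)) := hT.mul_left _
    have hmaj2 : Summable (fun n : ℕ => K2 * r ^ (2-2*p) * (1/((n:ℝ)+1)^2)) := hT.mul_left _
    have hS1 : (∑' n : ℕ, r ^ (-2 * (n : ℝ) - 2) * ‖m r n‖ ^ 2)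
        ≤ K1 * r ^ (2-2*p) * T := by
      have hsum1 : Summable (fun n : ℕ => r ^ (-2 * (n : ℝ) - 2) * ‖m r n‖ ^ 2) :=
        Summable.of_nonneg_of_le
          (fun n => mul_nonneg (Real.rpow_nonneg hr.le _) (by positivity))
          (hB1 r hr) hmaj
      calc (∑' n : ℕ, r ^ (-2 * (n : ℝ) - 2) * ‖m r n‖ ^ 2)
          ≤ ∑' n : ℕ, K1 * r ^ (2-2*p) * (1/((n:ℝ)+1)^2) := Summable.tsum_le_tsum (hB1 r hr) hsum1 hmaj
        _ = K1 * r ^ (2-2*p) * T := by rw [tsum_mul_left, hTdef]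
    have hS2 : (∑' n : ℕ, r ^ (2 * ((n : ℝ) + 1) - 2) * ‖M r (n + 1)‖ ^ 2)
        ≤ K2 * r ^ (2-2*p) * T := by
      have hsum2 : Summable (fun n : ℕ => r ^ (2 * ((n : ℝ) + 1) - 2) * ‖M r (n+1)‖ ^ 2) :=
        Summable.of_nonneg_of_le
          (fun n => mul_nonneg (Real.rpow_nonneg hr.le _) (by positivity))
          (hB2 r hr) hmaj2
      calc (∑' n : ℕ, r ^ (2 * ((n : ℝ) + 1) - 2) * ‖M r (n+1)‖ ^ 2)
          ≤ ∑' n : ℕ, K2 * r ^ (2-2*p) * (1/((n:ℝ)+1)^2) := Summable.tsum_le_tsum (hB2 r hr) hsum2 hmaj2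
        _ = K2 * r ^ (2-2*p) * T := by rw [tsum_mul_left, hTdef]
    have hsum_le : (1 / (2 * Real.pi)) *
        ((∑' n : ℕ, r ^ (-2 * (n : ℝ) - 2) * ‖m r n‖ ^ 2) +
         (∑' n : ℕ, r ^ (2 * ((n : ℝ) + 1) - 2) * ‖M r (n + 1)‖ ^ 2))
        ≤ C * r ^ (2-2*p) := by
      have := add_le_add hS1 hS2
      calc (1 / (2 * Real.pi)) * _ ≤ (1 / (2 * Real.pi)) *
            (K1 * r ^ (2-2*p) * T + K2 * r ^ (2-2*p) * T) :=
          mul_le_mul_of_nonneg_left this (by positivity)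
        _ = C * r ^ (2-2*p) := by rw [hCdef]; ring
    calc r * ((1 / (2 * Real.pi)) *
          ((∑' n : ℕ, r ^ (-2 * (n : ℝ) - 2) * ‖m r n‖ ^ 2) +
           (∑' n : ℕ, r ^ (2 * ((n : ℝ) + 1) - 2) * ‖M r (n + 1)‖ ^ 2)))
        ≤ r * (C * r ^ (2-2*p)) := mul_le_mul_of_nonneg_left hsum_le hr.le
      _ = C * r ^ (3 - 2/μ) := by
          rw [show r * (C * r ^ (2-2*p)) = C * (r ^ (1:ℝ) * r ^ (2-2*p)) from by
            rw [Real.rpow_one]; ring,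
            hrpow_add r hr, show (1:ℝ) + (2-2*p) = 3 - 2/μ from by rw [hpdef]; ring]
  refine ⟨⟨C, hbound⟩, ?_⟩
  have he : (0:ℝ) < 3 - 2/μ := by
    have : 2/μ < 3 := by rw [div_lt_iff₀ hμ0]; linarith
    linarith
  have hg0 : Tendsto (fun r : ℝ => C * r ^ (3 - 2/μ)) (𝓝[>] 0) (𝓝 0) := by
    have h1 : ContinuousAt (fun x : ℝ => x ^ (3 - 2/μ)) 0 :=
      Real.continuousAt_rpow_const 0 _ (Or.inr he.le)
    have h2 : Tendsto (fun x : ℝ => x ^ (3 - 2/μ)) (𝓝[>] (0:ℝ)) (𝓝 0) := by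
      have h3 := h1.tendsto
      rw [Real.zero_rpow he.ne'] at h3
      exact h3.mono_left nhdsWithin_le_nhds
    simpa using h2.const_mul C
  refine squeeze_zero' ?_ ?_ hg0
  · filter_upwards [self_mem_nhdsWithin] with r hr
    have hr : (0:ℝ) < r := hr
    rw [hv r hr]
    have h1 : (0:ℝ) ≤ ∑' n : ℕ, r ^ (-2 * (n : ℝ) - 2) * ‖m r n‖ ^ 2 :=
      tsum_nonneg fun n => mul_nonneg (Real.rpow_nonneg hr.le _) (by positivity)
    have h2 : (0:ℝ) ≤ ∑' n : ℕ, r ^ (2 * ((n : ℝ) + 1) - 2) * ‖M r (n + 1)‖ ^ 2 :=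
      tsum_nonneg fun n => mul_nonneg (Real.rpow_nonneg hr.le _) (by positivity)
    have : (0:ℝ) ≤ 1 / (2 * Real.pi) := by positivity
    exact mul_nonneg hr.le (mul_nonneg this (add_nonneg h1 h2))
  · filter_upwards [Ioc_mem_nhdsGT_of_mem (Set.mem_Ico.mpr ⟨le_refl 0, zero_lt_one⟩)] with r hr
    exact hbound r hr
end
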